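/- Let R be a tree, A ⊆ Ω[R] a dendroidal subset, and F an extension set with respect to A (satisfying axioms F1–F5). Fix a planar structure on R, inducing compatible total orders on the sets of F-faces 𝔉_F(P) and F-extensions 𝔈_F(P) of each missing face P. Call a pair (∂_f P, P) a canonical extension if ∂_f = min 𝔉_F(P) and ∂_f = min 𝔈_F(∂_f P). Then: (1) two canonical extensions (∂_{f₁}P₁, P₁) and (∂_{f₂}P₂, P₂) satisfy P₁ = P₂ iff ∂_{f₁}P₁ = ∂_{f₂}P₂; (2) the pairs (∂_g∂_f P, ∂_f P) and (∂_f P, P) cannot both be canonical extensions. -/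

import Mathlib

/-- A "pre-tree": a candidate subtree (face) of an ambient tree `T`, given by its
set of edges and the set of outputs of its vertices. -/
structure PreTree (T : Type) where
  edges : Set T
  vert : Set T

variable {T : Type} [PartialOrder T]

/-- `x` is an input of the vertex of `Q` with output `o`. -/
def InputOf (Q : PreTree T) (x o : T) : Prop :=
  x ∈ Q.edges ∧ o < x ∧ ¬∃ y ∈ Q.edges, o < y ∧ y < x

/-- The set of inputs of the vertex of `Q` with output `o`. -/
def Inps (Q : PreTree T) (o : T) : Set T := {x | InputOf Q x o}

/-- `x` is a leaf of `Q`: an edge carrying no vertex. -/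
def IsLeafOf (Q : PreTree T) (x : T) : Prop := x ∈ Q.edges ∧ x ∉ Q.vert

/-- `r` is the root edge of `Q`. -/
def RootOf (Q : PreTree T) (r : T) : Prop := r ∈ Q.edges ∧ ∀ x ∈ Q.edges, r ≤ x

/-- `e` is an inner edge of `Q`: it carries a vertex and is an input of a vertex. -/
def InnerE (Q : PreTree T) (e : T) : Prop := e ∈ Q.vert ∧ ∃ o ∈ Q.vert, InputOf Q e o

/-- `(X; t)` is an operation of the (pre-)tree `Q`: every leaf of `Q` above `t` is
above exactly one element of `X` and every stump of `Q` above `t` is above at most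
one element of `X`. -/
def IsOpIn (Q : PreTree T) (X : Set T) (t : T) : Prop :=
  X ⊆ Q.edges ∧ t ∈ Q.edges ∧ (∀ x ∈ X, t < x) ∧
  (∀ l, IsLeafOf Q l → t ≤ l → ∃! x, x ∈ X ∧ x ≤ l) ∧
  (∀ o ∈ Q.vert, Inps Q o = ∅ → t ≤ o →
    ∀ x₁ ∈ X, ∀ x₂ ∈ X, x₁ ≤ o → x₂ ≤ o → x₁ = x₂)

/-- `P` is a subtree (face) of `Q`: edges and vertices of `P` are among those of
`Q`, and each vertex of `P` is an operation of `Q`. -/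
def SubtreeRel (P Q : PreTree T) : Prop :=
  P.edges ⊆ Q.edges ∧ P.vert ⊆ Q.vert ∧ ∀ o ∈ P.vert, IsOpIn Q (Inps P o) o

/-- The ambient tree `T` with leaf set `L`, viewed as a pre-tree. -/
def fullTree (L : Set T) : PreTree T := ⟨Set.univ, {e | e ∉ L}⟩

/-- `P` is a face of the ambient tree `T` with leaf set `L`. -/
def IsFace (L : Set T) (P : PreTree T) : Prop :=
  P.edges.Nonempty ∧ (∃ r, RootOf P r) ∧
  P.vert ⊆ P.edges ∧ (∀ e ∈ P.vert, e ∉ L) ∧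
  (∀ e ∈ P.edges, (∃ x ∈ P.edges, e < x) → e ∈ P.vert) ∧
  SubtreeRel P (fullTree L)

/-- Number of vertices of a pre-tree. -/
noncomputable def nv (P : PreTree T) : ℕ := P.vert.ncard

/-- Labels for elementary face maps: inner faces, top faces (a top vertex `w` with
output `o`), and bottom faces (the bottom vertex `v` with output the root `r`,
keeping the subtree above the input `e`). -/
inductive FLbl (T : Type) where
  | inner (e : T)
  | top (w : Set T) (o : T)
  | bot (v : Set T) (r : T) (e : T)

/-- `ElemF f P Q` : `P` is obtained from `Q` by the elementary face map labelled
`f`, i.e. there is an elementary face map `∂_f : P → Q`. -/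
def ElemF (f : FLbl T) (P Q : PreTree T) : Prop :=
  match f with
  | .inner e => InnerE Q e ∧ P.edges = Q.edges \ {e} ∧ P.vert = Q.vert \ {e}
  | .top w o => o ∈ Q.vert ∧ w = Inps Q o ∧ (∀ x ∈ w, x ∉ Q.vert) ∧
      P.edges = Q.edges \ w ∧ P.vert = Q.vert \ {o}
  | .bot v r e => RootOf Q r ∧ r ∈ Q.vert ∧ v = Inps Q r ∧ e ∈ v ∧
      (∀ x ∈ v, x ≠ e → x ∉ Q.vert) ∧
      P.edges = {x ∈ Q.edges | e ≤ x} ∧ P.vert = Q.vert \ {r}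

/-- `IsSeq L P ms Q` : `ms` is a sequence of composable elementary face maps
between faces, going up from `P` to `Q` (an extension sequence of `P` to `Q`). -/
def IsSeq (L : Set T) : PreTree T → List (FLbl T × PreTree T × PreTree T) → PreTree T → Prop
  | P, [], Q => P = Q
  | P, m :: ms, Q =>
      m.2.1 = P ∧ ElemF m.1 m.2.1 m.2.2 ∧ IsFace L m.2.1 ∧ IsFace L m.2.2 ∧
      IsSeq L m.2.2 ms Q

/-- `x` is attached to the vertex of `Q` with output `o`. -/
def AttachedTo (Q : PreTree T) (x o : T) : Prop := x = o ∨ InputOf Q x o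

/-- `f` is the label of an outer (top or bottom) vertex of `Q` with output `o`. -/
def OuterLbl (Q : PreTree T) (f : FLbl T) (o : T) : Prop :=
  f = FLbl.top (Inps Q o) o ∨ (∃ e, f = FLbl.bot (Inps Q o) o e ∧ RootOf Q o)

/-- `f` is an outer vertex face label and `g` the inner face label of the unique
inner edge of `Q` attached to that vertex. -/
def MixedOrd (f g : FLbl T) (Q : PreTree T) : Prop :=
  ∃ e o, g = FLbl.inner e ∧ InnerE Q e ∧ OuterLbl Q f o ∧ AttachedTo Q e o ∧
    (∀ e', InnerE Q e' → AttachedTo Q e' o → e' = e)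

/-- `{∂_f, ∂_g}` is a mixed pair of elementary face maps of `Q`. -/
def MixedPair (f g : FLbl T) (Q : PreTree T) : Prop := MixedOrd f g Q ∨ MixedOrd g f Q

/-- A bad pair of (labels of) elementary face maps: two distinct top vertices with
the same output edge, or two distinct bottom vertices attached to the same unique
inner edge. -/
def BadPair (f g : FLbl T) : Prop :=
  f ≠ g ∧
  ((∃ w w' o, f = FLbl.top w o ∧ g = FLbl.top w' o) ∨
   (∃ v v' r r' e, f = FLbl.bot v r e ∧ g = FLbl.bot v' r' e))

/-- `∂_g : P → P₁` and `∂_f : P₁ → Q` form an adjacent pair of elementary face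
maps: either `{∂_v, ∂_w}` or `{∂_e, ∂_{w∘ₑv}}` for an inner edge `e` attached to a
top vertex `v` and a vertex `w` all of whose other inputs are leaves, or the
analogous configurations with the bottom vertex. -/
def AdjacentComp (g f : FLbl T) (P₁ Q : PreTree T) : Prop :=
  (∃ e o, InnerE Q e ∧ (∀ x, InputOf Q x e → IsLeafOf Q x) ∧ o ∈ Q.vert ∧
     InputOf Q e o ∧ (∀ x, InputOf Q x o → x ≠ e → IsLeafOf Q x) ∧
     (f = FLbl.top (Inps Q e) e ∨ f = FLbl.inner e) ∧ g = FLbl.top (Inps P₁ o) o)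
  ∨
  (∃ r e, RootOf Q r ∧ r ∈ Q.vert ∧ InputOf Q e r ∧
     (∀ x, InputOf Q x r → x ≠ e → IsLeafOf Q x) ∧
     e ∈ Q.vert ∧ (∀ x, InputOf Q x e → IsLeafOf Q x) ∧
     ((∃ x, f = FLbl.bot (Inps Q r) r e ∧ g = FLbl.bot (Inps P₁ e) e x) ∨
      (∃ x, f = FLbl.inner e ∧ g = FLbl.bot (Inps P₁ r) r x)))

/-- `F` is an extension set with respect to the dendroidal subset of `Ω[T]` whose
missing faces are `Missing`: a set of elementary face maps between missing faces
satisfying the five axioms (F1)–(F5). -/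
def ExtSet (L : Set T) (Missing : Set (PreTree T))
    (F : Set (FLbl T × PreTree T × PreTree T)) : Prop :=
  -- F consists of elementary face maps between missing faces
  (∀ m ∈ F, ElemF m.1 m.2.1 m.2.2 ∧ IsFace L m.2.1 ∧ IsFace L m.2.2 ∧
      m.2.1 ∈ Missing ∧ m.2.2 ∈ Missing) ∧
  -- (F1) no mixed pair
  (¬ ∃ f g P' P'' P, (f, P', P) ∈ F ∧ (g, P'', P) ∈ F ∧ MixedPair f g P) ∧
  -- (F1) no bad pair
  (¬ ∃ f g P P₁ P₂, (f, P, P₁) ∈ F ∧ (g, P, P₂) ∈ F ∧ BadPair f g) ∧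
  -- (F1) no adjacent pair
  (¬ ∃ f g P P₁ Q, (g, P, P₁) ∈ F ∧ (f, P₁, Q) ∈ F ∧ AdjacentComp g f P₁ Q) ∧
  -- (F2) the Bad Pair Axiom
  (∀ g P P', ElemF g P P' → IsFace L P → IsFace L P' → (g, P, P') ∉ F →
    ∀ f₁ P₁ f₂ P₂, (f₁, P, P₁) ∈ F → (f₂, P, P₂) ∈ F →
      BadPair f₁ g → BadPair f₂ g → f₁ = f₂ ∧ P₁ = P₂) ∧
  -- (F3) the Face Closure Axiom
  (∀ f g P Pf Pg Pfg, ElemF f Pf P → ElemF g Pg P → ElemF g Pfg Pf → ElemF f Pfg Pg →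
    IsFace L P → IsFace L Pf → IsFace L Pg → IsFace L Pfg →
    ((f, Pfg, Pg) ∈ F ∨ (f, Pf, P) ∈ F) → ((g, Pfg, Pf) ∈ F ∨ (g, Pg, P) ∈ F) →
    ((f, Pfg, Pg) ∈ F ∧ (f, Pf, P) ∈ F ∧ (g, Pfg, Pf) ∈ F ∧ (g, Pg, P) ∈ F)) ∧
  -- (F4) the Extension Closure Axiom
  (∀ f P P', (f, P, P') ∈ F → ∀ g P'', ElemF g P P'' → IsFace L P'' →
    ∀ U, (IsFace L U ∧ ∃ s₁ s₂, IsSeq L P' s₁ U ∧ IsSeq L P'' s₂ U ∧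
            s₁.length = s₂.length ∧ 1 ≤ s₁.length) →
      (∀ U', (IsFace L U' ∧ ∃ s₁ s₂, IsSeq L P' s₁ U' ∧ IsSeq L P'' s₂ U' ∧
                s₁.length = s₂.length ∧ 1 ≤ s₁.length) → SubtreeRel U' U → U' = U) →
      ∀ s, IsSeq L P'' s U → ∀ m ∈ s, m ∈ F) ∧
  -- (F5) the Existence Axiom
  (∀ P ∈ Missing, IsFace L P → (∃ f P', (f, P', P) ∈ F) ∨ (∃ f P', (f, P, P') ∈ F))

/-- `(Q, P)` is a canonical extension: an `F`-map `∂_f : Q → P` such that `f` is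
the least element of the set of `F`-faces of `P` and the least element of the set
of `F`-extensions of `Q`, with respect to the total order `pord` on labels induced
by the planar structure. -/
def Canon (F : Set (FLbl T × PreTree T × PreTree T))
    (pord : FLbl T → FLbl T → Prop) (Q P : PreTree T) : Prop :=
  ∃ f, (f, Q, P) ∈ F ∧ (∀ g P', (g, P', P) ∈ F → pord f g) ∧
    (∀ g P', (g, Q, P') ∈ F → pord f g)

section Stmt16Aux
set_option linter.unusedSectionVars false
set_option linter.unusedVariables false

variable {T : Type} [PartialOrder T]

lemma pt_ext {P Q : PreTree T} (he : P.edges = Q.edges) (hv : P.vert = Q.vert) : P = Q := by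
  cases P; cases Q; simp_all

lemma exists_min_in [Fintype T] {S : Set T} (h : S.Nonempty) :
    ∃ m ∈ S, ∀ b ∈ S, ¬ b < m := by
  classical
  obtain ⟨m, hm, hmin⟩ := S.toFinite.toFinset.exists_minimal
    (by rw [Set.Finite.toFinset_nonempty]; exact h)
  refine ⟨m, by simpa using hm, fun b hb hlt => (not_le_of_gt hlt) (hmin (by simpa using hb) hlt.le)⟩

lemma exists_max_in [Fintype T] {S : Set T} (h : S.Nonempty) :
    ∃ m ∈ S, ∀ b ∈ S, ¬ m < b := by
  classical
  obtain ⟨m, hm, hmax⟩ := S.toFinite.toFinset.exists_maximal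
    (by rw [Set.Finite.toFinset_nonempty]; exact h)
  refine ⟨m, by simpa using hm, fun b hb hlt => (not_le_of_gt hlt) (hmax (by simpa using hb) hlt.le)⟩

lemma root_unique {P : PreTree T} {r r' : T} (h : RootOf P r) (h' : RootOf P r') : r = r' :=
  le_antisymm (h.2 r' h'.1) (h'.2 r h.1)

lemma root_of_sub {A B : PreTree T} {r : T} (h : RootOf B r) (hr : r ∈ A.edges)
    (hAB : A.edges ⊆ B.edges) : RootOf A r :=
  ⟨hr, fun x hx => h.2 x (hAB hx)⟩

lemma face_vsub {L : Set T} {B : PreTree T} (hB : IsFace L B) : B.vert ⊆ B.edges := hB.2.2.1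

lemma face_full {L : Set T} {B : PreTree T} (hB : IsFace L B) {x y : T}
    (hx : x ∈ B.edges) (hy : y ∈ B.edges) (hlt : x < y) : x ∈ B.vert :=
  hB.2.2.2.2.1 x hx ⟨y, hy, hlt⟩

lemma face_ops {L : Set T} {B : PreTree T} (hB : IsFace L B) :
    ∀ o ∈ B.vert, IsOpIn (fullTree L) (Inps B o) o := hB.2.2.2.2.2.2.2

lemma inps_sub_edges {B : PreTree T} {o : T} : Inps B o ⊆ B.edges := fun _ hx => hx.1

lemma input_lt {B : PreTree T} {x o : T} (h : InputOf B x o) : o < x := h.2.1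

lemma input_not_le_input {B : PreTree T} {x y o : T} (hx : InputOf B x o)
    (hy : InputOf B y o) (hne : x ≠ y) : ¬ x ≤ y := by
  intro hle
  exact hy.2.2 ⟨x, hx.1, hx.2.1, lt_of_le_of_ne hle hne⟩

/-- below any `x > o` there is an input of `o`. -/
lemma input_below [Fintype T] {L : Set T} {B : PreTree T} (hB : IsFace L B) {o x : T}
    (hx : x ∈ B.edges) (ho : o ∈ B.edges) (hlt : o < x) :
    ∃ y, InputOf B y o ∧ y ≤ x := by
  obtain ⟨m, hm, hmin⟩ := exists_min_in (S := {z | z ∈ B.edges ∧ o < z ∧ z ≤ x})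
    ⟨x, hx, hlt, le_rfl⟩
  refine ⟨m, ⟨hm.1, hm.2.1, ?_⟩, hm.2.2⟩
  rintro ⟨y, hy, h1, h2⟩
  exact hmin y ⟨hy, h1, le_trans h2.le hm.2.2⟩ h2

/-- any non-root edge is an input of some vertex. -/
lemma attach_above [Fintype T] {L : Set T} {B : PreTree T} (hB : IsFace L B) {x y : T}
    (hx : x ∈ B.edges) (hy : y ∈ B.edges) (hlt : y < x) :
    ∃ o ∈ B.vert, InputOf B x o := by
  obtain ⟨m, hm, hmax⟩ := exists_max_in (S := {z | z ∈ B.edges ∧ z < x}) ⟨y, hy, hlt⟩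
  refine ⟨m, face_full hB hm.1 hx hm.2, hx, hm.2, ?_⟩
  rintro ⟨z, hz, h1, h2⟩
  exact hmax z ⟨hz, h2⟩ h1

lemma inputOf_mono {A B : PreTree T} {x o : T} (hAB : A.edges ⊆ B.edges)
    (h : InputOf B x o) (hx : x ∈ A.edges) : InputOf A x o := by
  refine ⟨hx, h.2.1, ?_⟩
  rintro ⟨y, hy, h1, h2⟩
  exact h.2.2 ⟨y, hAB hy, h1, h2⟩

lemma inputOf_lift {A B : PreTree T} {x o : T} (hAB : A.edges ⊆ B.edges)
    (h : InputOf A x o) (hmid : ∀ z ∈ B.edges, o < z → z < x → z ∈ A.edges) :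
    InputOf B x o := by
  refine ⟨hAB h.1, h.2.1, ?_⟩
  rintro ⟨z, hz, h1, h2⟩
  exact h.2.2 ⟨z, hmid z hz h1 h2, h1, h2⟩

end Stmt16Aux
section Stmt16Aux2
set_option linter.unusedSectionVars false
set_option linter.unusedVariables false
set_option maxHeartbeats 1000000

variable {T : Type} [PartialOrder T]

lemma elemF_edges_sub {f : FLbl T} {A B : PreTree T} (h : ElemF f A B) :
    A.edges ⊆ B.edges := by
  cases f with
  | inner e => rw [h.2.1]; exact fun z hz => hz.1
  | top w o => rw [h.2.2.2.1]; exact fun z hz => hz.1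
  | bot v r e => rw [h.2.2.2.2.2.1]; exact fun z hz => hz.1

lemma elemF_vert_eq {f : FLbl T} {A B : PreTree T} (h : ElemF f A B) :
    ∃ x ∈ B.vert, A.vert = B.vert \ {x} := by
  cases f with
  | inner e => exact ⟨e, h.1.1, h.2.2⟩
  | top w o => exact ⟨o, h.1, h.2.2.2.2⟩
  | bot v r e => exact ⟨r, h.2.1, h.2.2.2.2.2.2⟩

lemma elemF_vert_sub {f : FLbl T} {A B : PreTree T} (h : ElemF f A B) :
    A.vert ⊆ B.vert := by
  obtain ⟨x, hx, hv⟩ := elemF_vert_eq h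
  rw [hv]; exact fun z hz => hz.1

lemma elemF_nv [Fintype T] {f : FLbl T} {A B : PreTree T} (h : ElemF f A B) :
    nv A + 1 = nv B := by
  obtain ⟨x, hx, hv⟩ := elemF_vert_eq h
  rw [nv, nv, hv]
  exact Set.ncard_diff_singleton_add_one hx (Set.toFinite _)

lemma elemF_left_unique {f : FLbl T} {A A' B : PreTree T} (h : ElemF f A B)
    (h' : ElemF f A' B) : A = A' := by
  cases f with
  | inner e => exact pt_ext (h.2.1.trans h'.2.1.symm) (h.2.2.trans h'.2.2.symm)
  | top w o => exact pt_ext (h.2.2.2.1.trans h'.2.2.2.1.symm) (h.2.2.2.2.trans h'.2.2.2.2.symm)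
  | bot v r e =>
      exact pt_ext (h.2.2.2.2.2.1.trans h'.2.2.2.2.2.1.symm) ((h.2.2.2.2.2.2).trans (h'.2.2.2.2.2.2).symm)

/-- Inputs are stable under a bottom face, above the kept branch. -/
lemma bot_inps_eq {v : Set T} {r e : T} {A B : PreTree T} (h : ElemF (.bot v r e) A B)
    {o : T} (ho : e ≤ o) : Inps A o = Inps B o := by
  obtain ⟨hr, hrv, hv, hev, hcond, hE, hV⟩ := h
  have hsub : A.edges ⊆ B.edges := by rw [hE]; exact fun z hz => hz.1
  ext x
  constructor
  · intro hx
    exact inputOf_lift hsub hx (fun z hz h1 h2 => by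
      rw [hE]; exact ⟨hz, le_trans ho h1.le⟩)
  · intro hx
    exact inputOf_mono hsub hx (by rw [hE]; exact ⟨hx.1, le_trans ho hx.2.1.le⟩)

/-- Inputs of other vertices are stable under a top face. -/
lemma top_inps_eq {L : Set T} {w : Set T} {o₀ : T} {A B : PreTree T}
    (hch : ∀ e s t : T, s ≤ e → t ≤ e → s ≤ t ∨ t ≤ s)
    (h : ElemF (.top w o₀) A B) (hB : IsFace L B)
    {o : T} (ho : o ∈ B.edges) (hne : o ≠ o₀) : Inps A o = Inps B o := by
  classical
  obtain ⟨ho₀, hw, hwnv, hE, hV⟩ := h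
  subst hw
  have ho₀e : o₀ ∈ B.edges := face_vsub hB ho₀
  have hsub : A.edges ⊆ B.edges := by rw [hE]; exact fun z hz => hz.1
  ext x
  constructor
  · intro hx
    refine inputOf_lift hsub hx (fun z hz h1 h2 => ?_)
    rw [hE]
    refine ⟨hz, fun hzw => ?_⟩
    rcases hch z o₀ o hzw.2.1.le h1.le with hc | hc
    · rcases lt_or_eq_of_le hc with hc' | hc'
      · exact hzw.2.2 ⟨o, ho, hc', h1⟩
      · exact hne hc'.symm
    · have hc' : o < o₀ := lt_of_le_of_ne hc hne
      have ho₀A : o₀ ∈ A.edges := by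
        rw [hE]; exact ⟨ho₀e, fun hcon => absurd hcon.2.1 (lt_irrefl o₀)⟩
      exact hx.2.2 ⟨o₀, ho₀A, hc', lt_trans hzw.2.1 h2⟩
  · intro hx
    have hxw : ¬ InputOf B x o₀ := by
      intro hxw
      rcases hch x o₀ o hxw.2.1.le hx.2.1.le with hc | hc
      · rcases lt_or_eq_of_le hc with hc' | hc'
        · exact hxw.2.2 ⟨o, ho, hc', hx.2.1⟩
        · exact hne hc'.symm
      · exact hx.2.2 ⟨o₀, ho₀e, lt_of_le_of_ne hc hne, hxw.2.1⟩
    exact inputOf_mono hsub hx (by rw [hE]; exact ⟨hx.1, hxw⟩)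

/-- Inputs of vertices not carrying the contracted edge are stable under an inner face. -/
lemma inner_inps_eq [Fintype T] {L : Set T} {e : T} {A B : PreTree T}
    (h : ElemF (.inner e) A B) (hB : IsFace L B)
    {o : T} (ho : o ∈ B.edges) (hne : e ∉ Inps B o) : Inps A o = Inps B o := by
  obtain ⟨⟨hev, oe, hoe, hin⟩, hE, hV⟩ := h
  have hsub : A.edges ⊆ B.edges := by rw [hE]; exact fun z hz => hz.1
  have heB : e ∈ B.edges := face_vsub hB hev
  ext x
  constructor
  · intro hx
    refine inputOf_lift hsub hx (fun z hz h1 h2 => ?_)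
    rw [hE]
    refine ⟨hz, fun hze => ?_⟩
    rw [Set.mem_singleton_iff] at hze
    subst hze
    obtain ⟨y, hy, hyle⟩ := input_below hB heB ho h1
    rcases lt_or_eq_of_le hyle with hylt | hyeq
    · have hyA : y ∈ A.edges := by
        rw [hE]; exact ⟨hy.1, fun hc => absurd (hc.symm ▸ hylt) (lt_irrefl _)⟩
      exact hx.2.2 ⟨y, hyA, hy.2.1, lt_trans hylt h2⟩
    · exact hne (hyeq ▸ hy)
  · intro hx
    have hxe : x ≠ e := fun hc => hne (hc ▸ hx)
    exact inputOf_mono hsub hx (by rw [hE]; exact ⟨hx.1, hxe⟩)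

/-- Inputs of the vertex carrying the contracted edge merge under an inner face. -/
lemma inner_inps_merge {L : Set T} {e : T} {A B : PreTree T}
    (hch : ∀ e s t : T, s ≤ e → t ≤ e → s ≤ t ∨ t ≤ s)
    (h : ElemF (.inner e) A B) (hB : IsFace L B)
    {o : T} (he : e ∈ Inps B o) : Inps A o = (Inps B o \ {e}) ∪ Inps B e := by
  classical
  obtain ⟨⟨hev, oe, hoe, hin⟩, hE, hV⟩ := h
  have hsub : A.edges ⊆ B.edges := by rw [hE]; exact fun z hz => hz.1
  ext x
  constructor
  · intro hx
    have hxe : x ≠ e := by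
      intro hc; have := hx.1; rw [hE, hc] at this; exact this.2 rfl
    by_cases hlt : e < x
    · refine Or.inr ⟨hsub hx.1, hlt, ?_⟩
      rintro ⟨z, hz, h1, h2⟩
      have hzA : z ∈ A.edges := by
        rw [hE]; exact ⟨hz, fun hc => absurd (hc ▸ h1) (lt_irrefl _)⟩
      exact hx.2.2 ⟨z, hzA, lt_trans he.2.1 h1, h2⟩
    · refine Or.inl ⟨⟨hsub hx.1, hx.2.1, ?_⟩, hxe⟩
      rintro ⟨z, hz, h1, h2⟩
      have hze : z ≠ e := fun hc => hlt (hc ▸ h2)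
      exact hx.2.2 ⟨z, by rw [hE]; exact ⟨hz, hze⟩, h1, h2⟩
  · intro hx
    rcases hx with ⟨hx, hxe⟩ | hx
    · exact inputOf_mono hsub hx (by rw [hE]; exact ⟨hx.1, hxe⟩)
    · have hxe : x ≠ e := fun hc => absurd (hc ▸ hx.2.1) (lt_irrefl _)
      refine ⟨by rw [hE]; exact ⟨hx.1, hxe⟩, lt_trans he.2.1 hx.2.1, ?_⟩
      rintro ⟨z, hz, h1, h2⟩
      have hzB : z ∈ B.edges := hsub hz
      have hze : z ≠ e := by
        intro hc; subst hc; rw [hE] at hz; exact hz.2 rfl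
      rcases hch x z e h2.le hx.2.1.le with hc | hc
      · exact he.2.2 ⟨z, hzB, h1, lt_of_le_of_ne hc hze⟩
      · exact hx.2.2 ⟨z, hzB, lt_of_le_of_ne hc (Ne.symm hze), h2⟩

end Stmt16Aux2
section Stmt16Aux3
set_option linter.unusedSectionVars false
set_option linter.unusedVariables false
set_option maxHeartbeats 1000000

variable {T : Type} [PartialOrder T]

lemma inner_recon {L : Set T} {e : T} {A B : PreTree T} (h : ElemF (.inner e) A B)
    (hB : IsFace L B) : B.edges = A.edges ∪ {e} ∧ B.vert = A.vert ∪ {e} := by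
  classical
  obtain ⟨⟨hev, hinner⟩, hE, hV⟩ := h
  constructor
  · ext x
    constructor
    · intro hx
      by_cases hxe : x = e
      · exact Or.inr hxe
      · exact Or.inl (by rw [hE]; exact ⟨hx, hxe⟩)
    · rintro (hx | hx)
      · rw [hE] at hx; exact hx.1
      · rw [Set.mem_singleton_iff] at hx; exact hx ▸ face_vsub hB hev
  · ext x
    constructor
    · intro hx
      by_cases hxe : x = e
      · exact Or.inr hxe
      · exact Or.inl (by rw [hV]; exact ⟨hx, hxe⟩)
    · rintro (hx | hx)
      · rw [hV] at hx; exact hx.1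
      · rw [Set.mem_singleton_iff] at hx; exact hx ▸ hev

lemma top_recon {L : Set T} {w : Set T} {o : T} {A B : PreTree T} (h : ElemF (.top w o) A B)
    (hB : IsFace L B) : B.edges = A.edges ∪ w ∧ B.vert = A.vert ∪ {o} := by
  classical
  obtain ⟨hov, hw, hwnv, hE, hV⟩ := h
  constructor
  · ext x
    constructor
    · intro hx
      by_cases hxw : x ∈ w
      · exact Or.inr hxw
      · exact Or.inl (by rw [hE]; exact ⟨hx, hxw⟩)
    · rintro (hx | hx)
      · rw [hE] at hx; exact hx.1
      · exact (hw ▸ hx).1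
  · ext x
    constructor
    · intro hx
      by_cases hxo : x = o
      · exact Or.inr hxo
      · exact Or.inl (by rw [hV]; exact ⟨hx, hxo⟩)
    · rintro (hx | hx)
      · rw [hV] at hx; exact hx.1
      · rw [Set.mem_singleton_iff] at hx; exact hx ▸ hov

/-- All vertices except the root vertex lie above the kept branch of a bottom face. -/
lemma bot_key [Fintype T] {L : Set T} {v : Set T} {r e : T} {A B : PreTree T}
    (h : ElemF (.bot v r e) A B) (hB : IsFace L B) :
    ∀ x ∈ B.edges, x ≠ r → ¬ e ≤ x → x ∈ v \ {e} ∧ x ∉ B.vert := by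
  classical
  obtain ⟨hr, hrv, hv, hev, hcond, hE, hV⟩ := h
  intro x hx hxr hxe
  have hrx : r < x := lt_of_le_of_ne (hr.2 x hx) (Ne.symm hxr)
  obtain ⟨y, hy, hyle⟩ := input_below hB hx hr.1 hrx
  have hyv : y ∈ v := hv ▸ hy
  have hye : y ≠ e := by
    intro hc; subst hc; exact hxe hyle
  have hynv : y ∉ B.vert := hcond y hyv hye
  rcases lt_or_eq_of_le hyle with hlt | heq
  · exact absurd (face_full hB hy.1 hx hlt) hynv
  · subst heq
    exact ⟨⟨hyv, hye⟩, hynv⟩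

lemma bot_recon [Fintype T] {L : Set T} {v : Set T} {r e : T} {A B : PreTree T}
    (h : ElemF (.bot v r e) A B) (hB : IsFace L B) :
    B.edges = A.edges ∪ ({r} ∪ (v \ {e})) ∧ B.vert = A.vert ∪ {r} := by
  classical
  have hkey := bot_key h hB
  obtain ⟨hr, hrv, hv, hev, hcond, hE, hV⟩ := h
  constructor
  · ext x
    constructor
    · intro hx
      by_cases hxe : e ≤ x
      · exact Or.inl (by rw [hE]; exact ⟨hx, hxe⟩)
      by_cases hxr : x = r
      · exact Or.inr (Or.inl hxr)
      · exact Or.inr (Or.inr (hkey x hx hxr hxe).1)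
    · rintro (hx | hx | hx)
      · rw [hE] at hx; exact hx.1
      · rw [Set.mem_singleton_iff] at hx; exact hx ▸ hr.1
      · have : x ∈ Inps B r := hv ▸ hx.1
        exact this.1
  · ext x
    constructor
    · intro hx
      by_cases hxr : x = r
      · exact Or.inr hxr
      · exact Or.inl (by rw [hV]; exact ⟨hx, hxr⟩)
    · rintro (hx | hx)
      · rw [hV] at hx; exact hx.1
      · rw [Set.mem_singleton_iff] at hx; exact hx ▸ hrv

lemma elemF_right_unique [Fintype T] {L : Set T} {f : FLbl T} {A B B' : PreTree T}
    (h : ElemF f A B) (h' : ElemF f A B') (hB : IsFace L B) (hB' : IsFace L B') :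
    B = B' := by
  cases f with
  | inner e =>
    obtain ⟨he1, hv1⟩ := inner_recon h hB
    obtain ⟨he2, hv2⟩ := inner_recon h' hB'
    exact pt_ext (he1.trans he2.symm) (hv1.trans hv2.symm)
  | top w o =>
    obtain ⟨he1, hv1⟩ := top_recon h hB
    obtain ⟨he2, hv2⟩ := top_recon h' hB'
    exact pt_ext (he1.trans he2.symm) (hv1.trans hv2.symm)
  | bot v r e =>
    obtain ⟨he1, hv1⟩ := bot_recon h hB
    obtain ⟨he2, hv2⟩ := bot_recon h' hB'
    exact pt_ext (he1.trans he2.symm) (hv1.trans hv2.symm)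

lemma full_leaf_iff {L : Set T} {l : T} : IsLeafOf (fullTree L) l ↔ l ∈ L := by
  classical
  simp [IsLeafOf, fullTree, not_not]

lemma opin_comp {L : Set T} {X Y : Set T} {t e : T} (hX : IsOpIn (fullTree L) X t)
    (he : e ∈ X) (hY : IsOpIn (fullTree L) Y e) :
    IsOpIn (fullTree L) ((X \ {e}) ∪ Y) t := by
  classical
  obtain ⟨-, -, hXlt, hXleaf, hXst⟩ := hX
  obtain ⟨-, -, hYlt, hYleaf, hYst⟩ := hY
  have hte : t < e := hXlt e he
  refine ⟨Set.subset_univ _, Set.mem_univ _, ?_, ?_, ?_⟩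
  · rintro x (⟨hx, -⟩ | hx)
    · exact hXlt x hx
    · exact lt_trans hte (hYlt x hx)
  · intro l hl ht
    obtain ⟨x, ⟨hxX, hxl⟩, hux⟩ := hXleaf l hl ht
    by_cases hxe : x = e
    · subst hxe
      obtain ⟨y, ⟨hyY, hyl⟩, huy⟩ := hYleaf l hl hxl
      refine ⟨y, ⟨Or.inr hyY, hyl⟩, ?_⟩
      rintro z ⟨⟨hzX, hze⟩ | hzY, hzl⟩
      · exact absurd (hux z ⟨hzX, hzl⟩) hze
      · exact huy z ⟨hzY, hzl⟩
    · refine ⟨x, ⟨Or.inl ⟨hxX, hxe⟩, hxl⟩, ?_⟩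
      rintro z ⟨⟨hzX, hze⟩ | hzY, hzl⟩
      · exact hux z ⟨hzX, hzl⟩
      · exact absurd (hux e ⟨he, le_trans (hYlt z hzY).le hzl⟩).symm hxe
  · intro o ho hstump hto x₁ hx₁ x₂ hx₂ h₁ h₂
    rcases hx₁ with ⟨hx₁, hx₁e⟩ | hx₁ <;> rcases hx₂ with ⟨hx₂, hx₂e⟩ | hx₂
    · exact hXst o ho hstump hto x₁ hx₁ x₂ hx₂ h₁ h₂
    · exact absurd (hXst o ho hstump hto x₁ hx₁ e he h₁ (le_trans (hYlt x₂ hx₂).le h₂)) hx₁e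
    · have := hXst o ho hstump hto x₂ hx₂ e he h₂ (le_trans (hYlt x₁ hx₁).le h₁)
      exact absurd (Set.mem_singleton_iff.mpr this) hx₂e
    · exact hYst o ho hstump (le_trans (hYlt x₁ hx₁).le h₁) x₁ hx₁ x₂ hx₂ h₁ h₂

end Stmt16Aux3
section Stmt16Aux4
set_option linter.unusedSectionVars false
set_option linter.unusedVariables false
set_option maxHeartbeats 1000000

variable {T : Type} [PartialOrder T]

/-- A face of a face is a face. -/
lemma isFace_step [Fintype T] {L : Set T}
    (hch : ∀ e s t : T, s ≤ e → t ≤ e → s ≤ t ∨ t ≤ s)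
    {f : FLbl T} {A B : PreTree T} (h : ElemF f A B) (hB : IsFace L B) : IsFace L A := by
  classical
  obtain ⟨hne, ⟨r, hr⟩, hvsub, hvL, hfull, hstree⟩ := hB
  have hB : IsFace L B := ⟨hne, ⟨r, hr⟩, hvsub, hvL, hfull, hstree⟩
  cases f with
  | inner e =>
    obtain ⟨⟨hev, oe, hoe, hin⟩, hE, hV⟩ := h
    have hre : r < e := lt_of_le_of_lt (hr.2 oe (hvsub hoe)) hin.2.1
    have hrA : r ∈ A.edges := by rw [hE]; exact ⟨hr.1, fun hc => absurd (hc ▸ hre) (lt_irrefl _)⟩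
    refine ⟨⟨r, hrA⟩, ⟨r, root_of_sub hr hrA (by rw [hE]; exact fun z hz => hz.1)⟩, ?_, ?_, ?_, ?_, ?_, ?_⟩
    · intro x hx
      rw [hV] at hx; rw [hE]
      exact ⟨hvsub hx.1, hx.2⟩
    · intro x hx
      rw [hV] at hx; exact hvL x hx.1
    · rintro x hx ⟨y, hy, hxy⟩
      rw [hE] at hx hy; rw [hV]
      exact ⟨hfull x hx.1 ⟨y, hy.1, hxy⟩, hx.2⟩
    · exact Set.subset_univ _
    · intro x hx
      rw [hV] at hx
      exact hstree.2.1 hx.1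
    · intro o ho
      rw [hV] at ho
      have hel : ElemF (FLbl.inner e) A B := ⟨⟨hev, oe, hoe, hin⟩, hE, hV⟩
      by_cases hem : e ∈ Inps B o
      · rw [inner_inps_merge hch hel hB hem]
        exact opin_comp (hstree.2.2 o ho.1) hem (hstree.2.2 e hev)
      · rw [inner_inps_eq hel hB (hvsub ho.1) hem]
        exact hstree.2.2 o ho.1
  | top w o₀ =>
    obtain ⟨ho₀, hw, hwnv, hE, hV⟩ := h
    have ho₀e : o₀ ∈ B.edges := hvsub ho₀
    have ho₀w : o₀ ∉ w := by
      intro hc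
      rw [hw] at hc
      have hc' : InputOf B o₀ o₀ := hc
      exact absurd hc'.2.1 (lt_irrefl _)
    have hrw : r ∉ w := by
      intro hc
      rw [hw] at hc
      have hc' : InputOf B r o₀ := hc
      exact absurd (lt_of_lt_of_le hc'.2.1 (hr.2 o₀ ho₀e)) (lt_irrefl _)
    have ho₀A : o₀ ∈ A.edges := by rw [hE]; exact ⟨ho₀e, ho₀w⟩
    have hsubA : A.edges ⊆ B.edges := by rw [hE]; exact fun z hz => hz.1
    have hel : ElemF (FLbl.top w o₀) A B := ⟨ho₀, hw, hwnv, hE, hV⟩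
    refine ⟨⟨o₀, ho₀A⟩, ⟨r, root_of_sub hr (by rw [hE]; exact ⟨hr.1, hrw⟩) hsubA⟩, ?_, ?_, ?_, ?_, ?_, ?_⟩
    · intro x hx
      rw [hV] at hx; rw [hE]
      exact ⟨hvsub hx.1, fun hc => hwnv x hc hx.1⟩
    · intro x hx
      rw [hV] at hx; exact hvL x hx.1
    · rintro x hx ⟨y, hy, hxy⟩
      rw [hE] at hx hy; rw [hV]
      refine ⟨hfull x hx.1 ⟨y, hy.1, hxy⟩, ?_⟩
      intro hc; subst hc
      obtain ⟨z, hz, hzle⟩ := input_below hB hy.1 ho₀e hxy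
      have hzw : z ∈ w := hw ▸ hz
      rcases lt_or_eq_of_le hzle with hlt | heq
      · exact hwnv z hzw (face_full hB hz.1 hy.1 hlt)
      · exact hy.2 (heq ▸ hzw)
    · exact Set.subset_univ _
    · intro x hx
      rw [hV] at hx
      exact hstree.2.1 hx.1
    · intro o ho
      rw [hV] at ho
      rw [top_inps_eq hch hel hB (hvsub ho.1) ho.2]
      exact hstree.2.2 o ho.1
  | bot v r₀ e =>
    have hkey := bot_key h hB
    obtain ⟨hr₀, hr₀v, hv, hev, hcond, hE, hV⟩ := h
    have hel : ElemF (FLbl.bot v r₀ e) A B := ⟨hr₀, hr₀v, hv, hev, hcond, hE, hV⟩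
    have hein : InputOf B e r₀ := by
      have : e ∈ Inps B r₀ := hv ▸ hev
      exact this
    have heB : e ∈ B.edges := hein.1
    have heA : e ∈ A.edges := by rw [hE]; exact ⟨heB, le_rfl⟩
    have hkey' : ∀ x ∈ B.vert, x ≠ r₀ → e ≤ x := by
      intro x hx hxr
      by_contra hc
      exact (hkey x (hvsub hx) hxr hc).2 hx
    refine ⟨⟨e, heA⟩, ⟨e, ?_⟩, ?_, ?_, ?_, ?_, ?_, ?_⟩
    · refine ⟨heA, fun x hx => ?_⟩
      rw [hE] at hx; exact hx.2
    · intro x hx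
      rw [hV] at hx; rw [hE]
      exact ⟨hvsub hx.1, hkey' x hx.1 hx.2⟩
    · intro x hx
      rw [hV] at hx; exact hvL x hx.1
    · rintro x hx ⟨y, hy, hxy⟩
      rw [hE] at hx hy; rw [hV]
      refine ⟨hfull x hx.1 ⟨y, hy.1, hxy⟩, ?_⟩
      intro hc; subst hc
      exact absurd (lt_of_lt_of_le hein.2.1 hx.2) (lt_irrefl _)
    · exact Set.subset_univ _
    · intro x hx
      rw [hV] at hx
      exact hstree.2.1 hx.1
    · intro o ho
      rw [hV] at ho
      rw [bot_inps_eq hel (hkey' o ho.1 ho.2)]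
      exact hstree.2.2 o ho.1

lemma isSeq_sub {L : Set T} : ∀ {s : List (FLbl T × PreTree T × PreTree T)} {A B : PreTree T},
    IsSeq L A s B → A.edges ⊆ B.edges ∧ A.vert ⊆ B.vert := by
  intro s
  induction s with
  | nil => intro A B h; rw [show A = B from h]; exact ⟨Set.Subset.rfl, Set.Subset.rfl⟩
  | cons m ms ih =>
    intro A B h
    obtain ⟨h1, h2, h3, h4, h5⟩ := h
    have hstep : A.edges ⊆ m.2.2.edges ∧ A.vert ⊆ m.2.2.vert := by
      rw [← h1]; exact ⟨elemF_edges_sub h2, elemF_vert_sub h2⟩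
    obtain ⟨i1, i2⟩ := ih h5
    exact ⟨hstep.1.trans i1, hstep.2.trans i2⟩

lemma isSeq_nv [Fintype T] {L : Set T} : ∀ {s : List (FLbl T × PreTree T × PreTree T)}
    {A B : PreTree T}, IsSeq L A s B → nv A + s.length = nv B := by
  intro s
  induction s with
  | nil => intro A B h; rw [show A = B from h]; simp
  | cons m ms ih =>
    intro A B h
    obtain ⟨h1, h2, h3, h4, h5⟩ := h
    have hstep : nv A + 1 = nv m.2.2 := by rw [← h1]; exact elemF_nv h2
    have := ih h5
    simp only [List.length_cons]
    omega

/-- The minimality property needed for axiom (F4), by vertex counting. -/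
lemma min_ext [Fintype T] {L : Set T} {P Q X : PreTree T} (hP : IsFace L P)
    (hnv : nv Q + 1 = nv P) (hedges : Q.edges ∪ X.edges = P.edges) :
    ∀ U', (IsFace L U' ∧ ∃ s₁ s₂, IsSeq L Q s₁ U' ∧ IsSeq L X s₂ U' ∧
        s₁.length = s₂.length ∧ 1 ≤ s₁.length) → SubtreeRel U' P → U' = P := by
  rintro U' ⟨hU', s₁, s₂, hs₁, hs₂, hlen, hpos⟩ hsub
  have hQs := isSeq_sub hs₁
  have hXs := isSeq_sub hs₂
  have hEe : U'.edges = P.edges :=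
    Set.Subset.antisymm hsub.1 (by rw [← hedges]; exact Set.union_subset hQs.1 hXs.1)
  have hk := isSeq_nv hs₁
  have hVle : nv P ≤ nv U' := by omega
  have hVe : U'.vert = P.vert :=
    Set.eq_of_subset_of_ncard_le hsub.2.1 hVle (Set.toFinite _)
  exact pt_ext hEe hVe

/-- The same elementary face label cannot occur twice in a row. -/
lemma elem_no_repeat {L : Set T} {f : FLbl T} {Q P R : PreTree T}
    (h1 : ElemF f Q P) (h2 : ElemF f R Q) (hQ : IsFace L Q) : False := by
  cases f with
  | inner e =>
    have he : e ∈ Q.edges := face_vsub hQ h2.1.1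
    rw [h1.2.1] at he; exact he.2 rfl
  | top w o =>
    have ho : o ∈ Q.vert := h2.1
    rw [h1.2.2.2.2] at ho; exact ho.2 rfl
  | bot v r e =>
    have hrv : r ∈ Q.vert := h2.2.1
    rw [h1.2.2.2.2.2.2] at hrv; exact hrv.2 rfl

end Stmt16Aux4
section Stmt16Cases
set_option linter.unusedSectionVars false
set_option linter.unusedVariables false
set_option maxHeartbeats 2000000

variable {T : Type} [PartialOrder T] [Fintype T] {L : Set T}

lemma case_ii (hch : ∀ e s t : T, s ≤ e → t ≤ e → s ≤ t ∨ t ≤ s)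
    {e e₂ : T} {P Q R : PreTree T}
    (hP : IsFace L P) (hQ : IsFace L Q) (hR : IsFace L R)
    (hef : ElemF (.inner e) Q P) (heg : ElemF (.inner e₂) R Q)
    (hSQ : ∀ Pg, ElemF (.inner e₂) Pg P → ElemF (.inner e) R Pg → False) : False := by
  classical
  obtain ⟨⟨hev, oe, hoe, hin⟩, hE, hV⟩ := hef
  obtain ⟨⟨he2v, o₂, ho₂, hin₂⟩, hE₂, hV₂⟩ := heg
  have he2P : e₂ ∈ P.vert := (hV ▸ he2v : e₂ ∈ P.vert \ {e}).1
  have heQ : e ∉ Q.edges := by rw [hE]; exact fun hc => hc.2 rfl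
  have hene2 : e ≠ e₂ := fun hc => heQ (hc ▸ face_vsub hQ he2v)
  have ho₂P : o₂ ∈ P.vert := (hV ▸ ho₂ : o₂ ∈ P.vert \ {e}).1
  have he2Pe : e₂ ∈ P.edges := face_vsub hP he2P
  have heP : e ∈ P.edges := face_vsub hP hev
  have hQsub : Q.edges ⊆ P.edges := by rw [hE]; exact fun z hz => hz.1
  have hInner : InnerE P e₂ := by
    by_cases hcase : o₂ < e ∧ e < e₂
    · refine ⟨he2P, e, hev, he2Pe, hcase.2, ?_⟩
      rintro ⟨z, hz, h1, h2⟩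
      have hze : z ≠ e := ne_of_gt h1
      exact hin₂.2.2 ⟨z, by rw [hE]; exact ⟨hz, hze⟩, lt_trans hcase.1 h1, h2⟩
    · refine ⟨he2P, o₂, ho₂P, inputOf_lift hQsub hin₂ (fun z hz h1 h2 => ?_)⟩
      rw [hE]
      exact ⟨hz, fun hc => by rw [Set.mem_singleton_iff] at hc; subst hc; exact hcase ⟨h1, h2⟩⟩
  have h1 : ElemF (.inner e₂) (⟨P.edges \ {e₂}, P.vert \ {e₂}⟩ : PreTree T) P :=
    ⟨hInner, rfl, rfl⟩
  have hePg : e ∈ P.edges \ {e₂} := ⟨heP, hene2⟩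
  have h2 : ElemF (.inner e) R (⟨P.edges \ {e₂}, P.vert \ {e₂}⟩ : PreTree T) := by
    refine ⟨⟨⟨hev, hene2⟩, ?_⟩, ?_, ?_⟩
    · by_cases hoee2 : oe = e₂
      · subst hoee2
        refine ⟨o₂, ⟨ho₂P, ne_of_lt hin₂.2.1⟩, hePg, lt_trans hin₂.2.1 hin.2.1, ?_⟩
        rintro ⟨z, hz, h1', h2'⟩
        rcases hch e z oe h2'.le hin.2.1.le with hc | hc
        · have hzo : z < oe := lt_of_le_of_ne hc (by exact fun hh => hz.2 (hh ▸ rfl))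
          have hze : z ≠ e := ne_of_lt h2'
          exact hin₂.2.2 ⟨z, by rw [hE]; exact ⟨hz.1, hze⟩, h1', hzo⟩
        · have hoz : oe < z := lt_of_le_of_ne hc (fun hh => hz.2 (hh ▸ rfl))
          exact hin.2.2 ⟨z, hz.1, hoz, h2'⟩
      · exact ⟨oe, ⟨hoe, hoee2⟩, inputOf_mono (fun x hx => hx.1) hin hePg⟩
    · rw [hE₂, hE, Set.diff_diff_comm]
    · rw [hV₂, hV, Set.diff_diff_comm]
  exact hSQ _ h1 h2

end Stmt16Cases
section Stmt16Cases2
set_option linter.unusedSectionVars false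
set_option linter.unusedVariables false
set_option maxHeartbeats 2000000

variable {T : Type} [PartialOrder T] [Fintype T] {L : Set T}

lemma case_it (hch : ∀ e s t : T, s ≤ e → t ≤ e → s ≤ t ∨ t ≤ s)
    {e o₂ : T} {w₂ : Set T} {P Q R : PreTree T}
    (hP : IsFace L P) (hQ : IsFace L Q) (hR : IsFace L R)
    (hef : ElemF (.inner e) Q P) (heg : ElemF (.top w₂ o₂) R Q)
    (hSQ : ∀ Pg, ElemF (.top w₂ o₂) Pg P → ElemF (.inner e) R Pg → False)
    (hADJ : AdjacentComp (.top w₂ o₂) (.inner e) Q P → False) : False := by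
  classical
  have hef' := hef
  obtain ⟨⟨hev, oe, hoe, hin⟩, hE, hV⟩ := hef
  obtain ⟨ho₂, hw₂, hw₂nv, hE₂, hV₂⟩ := heg
  have ho₂P : o₂ ∈ P.vert := (hV ▸ ho₂ : o₂ ∈ P.vert \ {e}).1
  have ho₂Pe : o₂ ∈ P.edges := face_vsub hP ho₂P
  have heP : e ∈ P.edges := face_vsub hP hev
  have heQ : e ∉ Q.edges := by rw [hE]; exact fun hc => hc.2 rfl
  have heo₂ : e ≠ o₂ := fun hc => heQ (hc ▸ face_vsub hQ ho₂)
  have hQsub : Q.edges ⊆ P.edges := by rw [hE]; exact fun z hz => hz.1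
  have hew₂ : e ∉ w₂ := fun hc => heQ (inps_sub_edges (hw₂ ▸ hc))
  by_cases hem : e ∈ Inps P o₂
  · -- adjacent pair
    apply hADJ
    left
    have hinem : InputOf P e o₂ := hem
    refine ⟨e, o₂, ⟨hev, o₂, ho₂P, hinem⟩, ?_, ho₂P, hinem, ?_, Or.inr rfl, by rw [hw₂]⟩
    · intro x hx
      have hxe : x ≠ e := ne_of_gt hx.2.1
      have hxQ : x ∈ Q.edges := by rw [hE]; exact ⟨hx.1, hxe⟩
      have hxw : x ∈ Inps Q o₂ := by
        refine ⟨hxQ, lt_trans hinem.2.1 hx.2.1, ?_⟩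
        rintro ⟨z, hz, h1, h2⟩
        have hzP : z ∈ P.edges := hQsub hz
        rcases hch x z e h2.le hx.2.1.le with hc | hc
        · have hze : z ≠ e := fun hh => heQ (hh ▸ hz)
          exact hinem.2.2 ⟨z, hzP, h1, lt_of_le_of_ne hc hze⟩
        · have hze : z ≠ e := fun hh => heQ (hh ▸ hz)
          exact hx.2.2 ⟨z, hzP, lt_of_le_of_ne hc (Ne.symm hze), h2⟩
      have hxnv : x ∉ Q.vert := hw₂nv x (hw₂ ▸ hxw)
      refine ⟨hx.1, fun hc => hxnv ?_⟩
      rw [hV]; exact ⟨hc, hxe⟩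
    · intro x hx hxe
      have hxQ : x ∈ Q.edges := by rw [hE]; exact ⟨hx.1, hxe⟩
      have hxw : x ∈ Inps Q o₂ := inputOf_mono hQsub hx hxQ
      have hxnv : x ∉ Q.vert := hw₂nv x (hw₂ ▸ hxw)
      refine ⟨hx.1, fun hc => hxnv ?_⟩
      rw [hV]; exact ⟨hc, hxe⟩
  · -- commuting square
    have hw₂P : w₂ = Inps P o₂ := by
      rw [hw₂, inner_inps_eq hef' hP ho₂Pe hem]
    have h1 : ElemF (.top w₂ o₂) (⟨P.edges \ w₂, P.vert \ {o₂}⟩ : PreTree T) P := by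
      refine ⟨ho₂P, hw₂P, ?_, rfl, rfl⟩
      intro x hxw hxv
      have hxe : x ≠ e := fun hc => hew₂ (hc ▸ hxw)
      exact hw₂nv x hxw (by rw [hV]; exact ⟨hxv, hxe⟩)
    have hoee2 : oe ≠ o₂ := fun hc => hem (hc ▸ hin)
    have h2 : ElemF (.inner e) R (⟨P.edges \ w₂, P.vert \ {o₂}⟩ : PreTree T) := by
      refine ⟨⟨⟨hev, heo₂⟩, oe, ⟨hoe, hoee2⟩,
        inputOf_mono (fun x hx => hx.1) hin ⟨heP, hew₂⟩⟩, ?_, ?_⟩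
      · rw [hE₂, hE, Set.diff_diff_comm]
      · rw [hV₂, hV, Set.diff_diff_comm]
    exact hSQ _ h1 h2

lemma case_ti (hch : ∀ e s t : T, s ≤ e → t ≤ e → s ≤ t ∨ t ≤ s)
    {e₂ o : T} {w : Set T} {P Q R : PreTree T}
    (hP : IsFace L P) (hQ : IsFace L Q) (hR : IsFace L R)
    (hef : ElemF (.top w o) Q P) (heg : ElemF (.inner e₂) R Q)
    (hSQ : ∀ Pg, ElemF (.inner e₂) Pg P → ElemF (.top w o) R Pg → False) : False := by
  classical
  have hef' := hef
  obtain ⟨hov, hw, hwnv, hE, hV⟩ := hef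
  obtain ⟨⟨he2v, o₂, ho₂, hin₂⟩, hE₂, hV₂⟩ := heg
  have he2P : e₂ ∈ P.vert := (hV ▸ he2v : e₂ ∈ P.vert \ {o}).1
  have ho₂P : o₂ ∈ P.vert := (hV ▸ ho₂ : o₂ ∈ P.vert \ {o}).1
  have he2o : e₂ ≠ o := ((hV ▸ he2v : e₂ ∈ P.vert \ {o}).2 : e₂ ∉ ({o} : Set T))
  have ho₂o : o₂ ≠ o := (hV ▸ ho₂ : o₂ ∈ P.vert \ {o}).2
  have hoP : o ∈ P.vert := hov
  have hoPe : o ∈ P.edges := face_vsub hP hoP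
  have he2Pe : e₂ ∈ P.edges := face_vsub hP he2P
  have hQsub : Q.edges ⊆ P.edges := by rw [hE]; exact fun z hz => hz.1
  have he2w : e₂ ∉ w := by
    intro hc
    have : e₂ ∉ Q.edges := by rw [hE]; exact fun hh => hh.2 hc
    exact this (face_vsub hQ he2v)
  -- e₂ is inner in P
  have hin₂P : InputOf P e₂ o₂ := by
    refine inputOf_lift hQsub hin₂ (fun z hz h1 h2 => ?_)
    rw [hE]
    refine ⟨hz, fun hzw => ?_⟩
    have hzin0 : z ∈ Inps P o := hw ▸ hzw
    have hzin : InputOf P z o := hzin0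
    rcases hch z o₂ o h1.le hzin.2.1.le with hc | hc
    · -- o₂ ≤ o
      have hlt : o₂ < o := lt_of_le_of_ne hc ho₂o
      have hoQ : o ∈ Q.edges := by
        rw [hE]
        refine ⟨hoPe, fun hc2 => ?_⟩
        have hc3 : o ∈ Inps P o := hw ▸ hc2
        exact absurd (hc3 : InputOf P o o).2.1 (lt_irrefl _)
      exact hin₂.2.2 ⟨o, hoQ, hlt, lt_trans hzin.2.1 h2⟩
    · -- o ≤ o₂
      have hlt : o < o₂ := lt_of_le_of_ne hc (Ne.symm ho₂o)
      exact hzin.2.2 ⟨o₂, face_vsub hP ho₂P, hlt, h1⟩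
  have h1 : ElemF (.inner e₂) (⟨P.edges \ {e₂}, P.vert \ {e₂}⟩ : PreTree T) P :=
    ⟨⟨he2P, o₂, ho₂P, hin₂P⟩, rfl, rfl⟩
  have hPgel := h1
  have hPg : IsFace L (⟨P.edges \ {e₂}, P.vert \ {e₂}⟩ : PreTree T) := isFace_step hch h1 hP
  have h2 : ElemF (.top w o) R (⟨P.edges \ {e₂}, P.vert \ {e₂}⟩ : PreTree T) := by
    have hwPg : Inps (⟨P.edges \ {e₂}, P.vert \ {e₂}⟩ : PreTree T) o = Inps P o := by
      refine inner_inps_eq hPgel hP hoPe ?_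
      intro hc
      exact he2w (hw ▸ hc)
    refine ⟨⟨hoP, fun hc => he2o (Set.mem_singleton_iff.mp hc).symm⟩, by rw [hw, hwPg], ?_, ?_, ?_⟩
    · intro x hxw hxv
      exact hwnv x hxw hxv.1
    · rw [hE₂, hE, Set.diff_diff_comm]
    · rw [hV₂, hV, Set.diff_diff_comm]
  exact hSQ _ h1 h2

end Stmt16Cases2
section Stmt16Cases3
set_option linter.unusedSectionVars false
set_option linter.unusedVariables false
set_option maxHeartbeats 2000000

variable {T : Type} [PartialOrder T] [Fintype T] {L : Set T}

lemma sep_diff (s w : Set T) (p : T → Prop) : {x ∈ s \ w | p x} = {x ∈ s | p x} \ w := by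
  ext x
  simp only [Set.mem_setOf_eq, Set.mem_diff]
  tauto

lemma case_tt (hch : ∀ e s t : T, s ≤ e → t ≤ e → s ≤ t ∨ t ≤ s)
    {o o₂ : T} {w w₂ : Set T} {P Q R : PreTree T}
    (hP : IsFace L P) (hQ : IsFace L Q) (hR : IsFace L R)
    (hef : ElemF (.top w o) Q P) (heg : ElemF (.top w₂ o₂) R Q)
    (hSQ : ∀ Pg, ElemF (.top w₂ o₂) Pg P → ElemF (.top w o) R Pg → False)
    (hADJ : AdjacentComp (.top w₂ o₂) (.top w o) Q P → False) : False := by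
  classical
  have hef' := hef
  obtain ⟨hov, hw, hwnv, hE, hV⟩ := hef
  obtain ⟨ho₂, hw₂, hw₂nv, hE₂, hV₂⟩ := heg
  have ho₂P : o₂ ∈ P.vert := (hV ▸ ho₂ : o₂ ∈ P.vert \ {o}).1
  have ho₂o : o₂ ≠ o := (hV ▸ ho₂ : o₂ ∈ P.vert \ {o}).2
  have ho₂Pe : o₂ ∈ P.edges := face_vsub hP ho₂P
  have hoPe : o ∈ P.edges := face_vsub hP hov
  have hQsub : Q.edges ⊆ P.edges := by rw [hE]; exact fun z hz => hz.1
  have how : o ∉ w := by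
    intro hc
    have hc2 : o ∈ Inps P o := hw ▸ hc
    exact absurd (hc2 : InputOf P o o).2.1 (lt_irrefl _)
  have hoQ : o ∈ Q.edges := by rw [hE]; exact ⟨hoPe, how⟩
  by_cases hmem : o ∈ w₂
  · -- adjacent pair
    apply hADJ
    left
    have hinQ0 : o ∈ Inps Q o₂ := hw₂ ▸ hmem
    have hinQ : InputOf Q o o₂ := hinQ0
    have hinP : InputOf P o o₂ := by
      refine inputOf_lift hQsub hinQ (fun z hz h1 h2 => ?_)
      rw [hE]
      refine ⟨hz, fun hzw => ?_⟩
      have hc2 : z ∈ Inps P o := hw ▸ hzw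
      exact absurd (lt_trans (hc2 : InputOf P z o).2.1 h2) (lt_irrefl _)
    refine ⟨o, o₂, ⟨hov, o₂, ho₂P, hinP⟩, ?_, ho₂P, hinP, ?_, Or.inl (by rw [hw]), by rw [hw₂]⟩
    · intro x hx
      have hxw : x ∈ Inps P o := hx
      rw [← hw] at hxw
      exact ⟨hx.1, hwnv x hxw⟩
    · intro x hx hxo
      have hxw : x ∉ w := by
        intro hc
        have hc2' : x ∈ Inps P o := hw ▸ hc
        have hc2 : InputOf P x o := hc2'
        rcases hch x o o₂ hc2.2.1.le hx.2.1.le with hc3 | hc3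
        · exact hc2.2.2 ⟨o₂, ho₂Pe, lt_of_le_of_ne hc3 ho₂o.symm, hx.2.1⟩
        · exact hx.2.2 ⟨o, hoPe, lt_of_le_of_ne hc3 ho₂o, hc2.2.1⟩
      have hxQ : x ∈ Q.edges := by rw [hE]; exact ⟨hx.1, hxw⟩
      have hxw₂ : x ∈ Inps Q o₂ := inputOf_mono hQsub hx hxQ
      have hxnv : x ∉ Q.vert := hw₂nv x (hw₂ ▸ hxw₂)
      refine ⟨hx.1, fun hc => hxnv ?_⟩
      rw [hV]; exact ⟨hc, hxo⟩
  · -- commuting square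
    have hw₂P : w₂ = Inps P o₂ := by
      rw [hw₂, top_inps_eq hch hef' hP ho₂Pe ho₂o]
    have h1 : ElemF (.top w₂ o₂) (⟨P.edges \ w₂, P.vert \ {o₂}⟩ : PreTree T) P := by
      refine ⟨ho₂P, hw₂P, ?_, rfl, rfl⟩
      intro x hxw hxv
      have hxo : x ≠ o := fun hc => hmem (hc ▸ hxw)
      exact hw₂nv x hxw (by rw [hV]; exact ⟨hxv, hxo⟩)
    have h2 : ElemF (.top w o) R (⟨P.edges \ w₂, P.vert \ {o₂}⟩ : PreTree T) := by
      have hwPg : Inps (⟨P.edges \ w₂, P.vert \ {o₂}⟩ : PreTree T) o = Inps P o :=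
        top_inps_eq hch h1 hP hoPe ho₂o.symm
      refine ⟨⟨hov, fun hc => ho₂o (Set.mem_singleton_iff.mp hc).symm⟩,
        by rw [hw, hwPg], ?_, ?_, ?_⟩
      · intro x hxw hxv
        exact hwnv x hxw hxv.1
      · rw [hE₂, hE, Set.diff_diff_comm]
      · rw [hV₂, hV, Set.diff_diff_comm]
    exact hSQ _ h1 h2

lemma case_bi (hch : ∀ e s t : T, s ≤ e → t ≤ e → s ≤ t ∨ t ≤ s)
    {e₂ r e : T} {v : Set T} {P Q R : PreTree T}
    (hP : IsFace L P) (hQ : IsFace L Q) (hR : IsFace L R)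
    (hef : ElemF (.bot v r e) Q P) (heg : ElemF (.inner e₂) R Q)
    (hSQ : ∀ Pg, ElemF (.inner e₂) Pg P → ElemF (.bot v r e) R Pg → False) : False := by
  classical
  have hef' := hef
  obtain ⟨hr, hrv, hv, hev, hcond, hE, hV⟩ := hef
  obtain ⟨⟨he2v, o₂, ho₂, hin₂⟩, hE₂, hV₂⟩ := heg
  have hein0 : e ∈ Inps P r := hv ▸ hev
  have hein : InputOf P e r := hein0
  have heP : e ∈ P.edges := hein.1
  have hre : r < e := hein.2.1
  have hQsub : Q.edges ⊆ P.edges := by rw [hE]; exact fun z hz => hz.1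
  have he2P : e₂ ∈ P.vert := (hV ▸ he2v : e₂ ∈ P.vert \ {r}).1
  have ho₂P : o₂ ∈ P.vert := (hV ▸ ho₂ : o₂ ∈ P.vert \ {r}).1
  have ho₂Q : o₂ ∈ Q.edges := face_vsub hQ ho₂
  have heo₂ : e ≤ o₂ := by rw [hE] at ho₂Q; exact ho₂Q.2
  have he2lt : e < e₂ := lt_of_le_of_lt heo₂ hin₂.2.1
  have hre2 : r < e₂ := lt_trans hre he2lt
  have hin₂P : InputOf P e₂ o₂ := by
    refine inputOf_lift hQsub hin₂ (fun z hz h1 h2 => ?_)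
    rw [hE]
    exact ⟨hz, le_trans heo₂ h1.le⟩
  have h1 : ElemF (.inner e₂) (⟨P.edges \ {e₂}, P.vert \ {e₂}⟩ : PreTree T) P :=
    ⟨⟨he2P, o₂, ho₂P, hin₂P⟩, rfl, rfl⟩
  have h2 : ElemF (.bot v r e) R (⟨P.edges \ {e₂}, P.vert \ {e₂}⟩ : PreTree T) := by
    have hre2' : r ≠ e₂ := ne_of_lt hre2
    have hrPg : r ∈ P.edges \ {e₂} := ⟨hr.1, hre2'⟩
    have he2nr : e₂ ∉ Inps P r := by
      intro hc
      exact (hc : InputOf P e₂ r).2.2 ⟨e, heP, hre, he2lt⟩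
    refine ⟨root_of_sub hr hrPg (fun z hz => hz.1), ⟨hrv, hre2'⟩, ?_, hev, ?_, ?_, ?_⟩
    · rw [hv, inner_inps_eq h1 hP hr.1 he2nr]
    · exact fun x hx hxe hc => hcond x hx hxe hc.1
    · rw [hE₂, hE]
      exact (sep_diff P.edges {e₂} (fun x => e ≤ x)).symm
    · rw [hV₂, hV, Set.diff_diff_comm]
  exact hSQ _ h1 h2

lemma case_bt (hch : ∀ e s t : T, s ≤ e → t ≤ e → s ≤ t ∨ t ≤ s)
    {o₂ r e : T} {v w₂ : Set T} {P Q R : PreTree T}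
    (hP : IsFace L P) (hQ : IsFace L Q) (hR : IsFace L R)
    (hef : ElemF (.bot v r e) Q P) (heg : ElemF (.top w₂ o₂) R Q)
    (hSQ : ∀ Pg, ElemF (.top w₂ o₂) Pg P → ElemF (.bot v r e) R Pg → False) : False := by
  classical
  have hef' := hef
  obtain ⟨hr, hrv, hv, hev, hcond, hE, hV⟩ := hef
  obtain ⟨ho₂, hw₂, hw₂nv, hE₂, hV₂⟩ := heg
  have hein0 : e ∈ Inps P r := hv ▸ hev
  have hein : InputOf P e r := hein0
  have hre : r < e := hein.2.1
  have ho₂P : o₂ ∈ P.vert := (hV ▸ ho₂ : o₂ ∈ P.vert \ {r}).1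
  have ho₂r : o₂ ≠ r := (hV ▸ ho₂ : o₂ ∈ P.vert \ {r}).2
  have ho₂Q : o₂ ∈ Q.edges := face_vsub hQ ho₂
  have heo₂ : e ≤ o₂ := by rw [hE] at ho₂Q; exact ho₂Q.2
  have hw₂P : w₂ = Inps P o₂ := by rw [hw₂, bot_inps_eq hef' heo₂]
  have hw₂r : ∀ x ∈ w₂, r < x := by
    intro x hx
    have hx0 : x ∈ Inps P o₂ := hw₂P ▸ hx
    have hx' : InputOf P x o₂ := hx0
    exact lt_of_lt_of_le hre (le_trans heo₂ hx'.2.1.le)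
  have h1 : ElemF (.top w₂ o₂) (⟨P.edges \ w₂, P.vert \ {o₂}⟩ : PreTree T) P := by
    refine ⟨ho₂P, hw₂P, ?_, rfl, rfl⟩
    intro x hxw hxv
    have hxr : x ≠ r := fun hc => absurd (hc ▸ hw₂r x hxw) (lt_irrefl _)
    exact hw₂nv x hxw (by rw [hV]; exact ⟨hxv, hxr⟩)
  have h2 : ElemF (.bot v r e) R (⟨P.edges \ w₂, P.vert \ {o₂}⟩ : PreTree T) := by
    have hrw₂ : r ∉ w₂ := fun hc => absurd (hw₂r r hc) (lt_irrefl _)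
    have hrPg : r ∈ P.edges \ w₂ := ⟨hr.1, hrw₂⟩
    refine ⟨root_of_sub hr hrPg (fun z hz => hz.1), ⟨hrv, ho₂r.symm⟩, ?_, hev, ?_, ?_, ?_⟩
    · rw [hv, top_inps_eq hch h1 hP hr.1 ho₂r.symm]
    · exact fun x hx hxe hc => hcond x hx hxe hc.1
    · rw [hE₂, hE]
      exact (sep_diff P.edges w₂ (fun x => e ≤ x)).symm
    · rw [hV₂, hV, Set.diff_diff_comm]
  exact hSQ _ h1 h2

end Stmt16Cases3
section Stmt16Cases4
set_option linter.unusedSectionVars false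
set_option linter.unusedVariables false
set_option maxHeartbeats 2000000

variable {T : Type} [PartialOrder T] [Fintype T] {L : Set T}

lemma case_bb (hch : ∀ e s t : T, s ≤ e → t ≤ e → s ≤ t ∨ t ≤ s)
    {r e r₂ e₂ : T} {v v₂ : Set T} {P Q R : PreTree T}
    (hP : IsFace L P) (hQ : IsFace L Q) (hR : IsFace L R)
    (hef : ElemF (.bot v r e) Q P) (heg : ElemF (.bot v₂ r₂ e₂) R Q)
    (hSQ : ∀ Pg, ElemF (.bot v₂ r₂ e₂) Pg P → ElemF (.bot v r e) R Pg → False)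
    (hADJ : AdjacentComp (.bot v₂ r₂ e₂) (.bot v r e) Q P → False)
    (hSM : ∀ (hx h' : FLbl T) (X : PreTree T), ElemF h' X P → ElemF hx R X →
        Q.edges ∪ X.edges = P.edges → MixedPair (.bot v r e) h' P → False) : False := by
  classical
  have hef' := hef
  have heg' := heg
  obtain ⟨hr, hrv, hv, hev, hcond, hE, hV⟩ := hef
  have hein0 : e ∈ Inps P r := hv ▸ hev
  have hein : InputOf P e r := hein0
  have heP : e ∈ P.edges := hein.1
  have hre : r < e := hein.2.1
  have hrQe : RootOf Q e := by
    refine ⟨by rw [hE]; exact ⟨heP, le_rfl⟩, fun x hx => ?_⟩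
    rw [hE] at hx; exact hx.2
  obtain ⟨hr₂, hr₂v, hv₂, he₂v, hcond₂, hE₂, hV₂⟩ := heg
  have hr₂e : r₂ = e := root_unique hr₂ hrQe
  rw [hr₂e] at hr₂ hr₂v hv₂ hV₂ hSQ hADJ
  have heV : e ∈ P.vert := (hV ▸ hr₂v : e ∈ P.vert \ {r}).1
  have hv₂P : v₂ = Inps P e := by rw [hv₂, bot_inps_eq hef' le_rfl]
  have he₂P0 : e₂ ∈ Inps P e := hv₂P ▸ he₂v
  have he₂P : InputOf P e₂ e := he₂P0
  have hee₂ : e < e₂ := he₂P.2.1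
  by_cases he₂vert : e₂ ∈ P.vert
  · -- F4 route via the inner face of `e`
    have h' : ElemF (.inner e) (⟨P.edges \ {e}, P.vert \ {e}⟩ : PreTree T) P :=
      ⟨⟨heV, r, hrv, hein⟩, rfl, rfl⟩
    have hre' : r ≠ e := ne_of_lt hre
    have hxel : ElemF (.bot ((v \ {e}) ∪ v₂) r e₂) R
        (⟨P.edges \ {e}, P.vert \ {e}⟩ : PreTree T) := by
      refine ⟨root_of_sub hr ⟨hr.1, hre'⟩ (fun z hz => hz.1), ⟨hrv, hre'⟩, ?_,
        Or.inr he₂v, ?_, ?_, ?_⟩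
      · rw [inner_inps_merge hch h' hP hein0, hv, hv₂P]
      · rintro x (⟨hxv, hxe⟩ | hxv₂) hxe₂
        · exact fun hc => hcond x hxv hxe hc.1
        · have hx' : InputOf P x e := by
            have : x ∈ Inps P e := by rw [← hv₂P]; exact hxv₂
            exact this
          have hxr : x ≠ r := fun hc => absurd (hc ▸ (lt_trans hre hx'.2.1)) (lt_irrefl _)
          have hxnQ : x ∉ Q.vert := hcond₂ x hxv₂ hxe₂
          intro hc
          exact hxnQ (by rw [hV]; exact ⟨hc.1, hxr⟩)
      · rw [hE₂, hE]
        ext x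
        simp only [Set.mem_setOf_eq, Set.mem_diff, Set.mem_singleton_iff]
        constructor
        · rintro ⟨⟨hxP, -⟩, hx2⟩
          exact ⟨⟨hxP, fun hc => absurd (hc ▸ hx2) (not_le_of_gt hee₂)⟩, hx2⟩
        · rintro ⟨⟨hxP, -⟩, hx2⟩
          exact ⟨⟨hxP, le_trans hee₂.le hx2⟩, hx2⟩
      · rw [hV₂, hV, Set.diff_diff_comm]
    have hunion : Q.edges ∪ (⟨P.edges \ {e}, P.vert \ {e}⟩ : PreTree T).edges = P.edges := by
      rw [hE]
      ext x
      simp only [Set.mem_union, Set.mem_setOf_eq, Set.mem_diff, Set.mem_singleton_iff]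
      constructor
      · rintro (⟨hx, -⟩ | ⟨hx, -⟩) <;> exact hx
      · intro hx
        by_cases hxe : x = e
        · exact Or.inl ⟨hx, hxe ▸ le_rfl⟩
        · exact Or.inr ⟨hx, hxe⟩
    have hmp : MixedPair (.bot v r e) (.inner e) P := by
      left
      refine ⟨e, r, rfl, ⟨heV, r, hrv, hein⟩, Or.inr ⟨e, by rw [hv], hr⟩, Or.inr hein, ?_⟩
      rintro e' ⟨he'v, o', ho', hin'⟩ (rfl | hatt)
      · exact absurd (hr.2 o' (face_vsub hP ho')) (not_le_of_gt hin'.2.1)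
      · by_contra he'e
        have he'val : e' ∈ v := by rw [hv]; exact hatt
        exact hcond e' he'val he'e he'v
    exact hSM _ _ _ h' hxel hunion hmp
  · -- adjacent pair
    apply hADJ
    right
    refine ⟨r, e, hr, hrv, hein, ?_, heV, ?_, Or.inl ⟨e₂, by rw [hv], by rw [hv₂]⟩⟩
    · intro x hx hxe
      have hxv : x ∈ v := by rw [hv]; exact hx
      exact ⟨hx.1, hcond x hxv hxe⟩
    · intro x hx
      have hxv₂ : x ∈ v₂ := by rw [hv₂P]; exact hx
      by_cases hxe₂ : x = e₂
      · exact ⟨hx.1, hxe₂ ▸ he₂vert⟩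
      · have hxr : x ≠ r := fun hc => absurd (hc ▸ (lt_trans hre hx.2.1)) (lt_irrefl _)
        have hxnQ : x ∉ Q.vert := hcond₂ x hxv₂ hxe₂
        refine ⟨hx.1, fun hc => hxnQ ?_⟩
        rw [hV]; exact ⟨hc, hxr⟩
  
end Stmt16Cases4
section Stmt16Cases5
set_option linter.unusedSectionVars false
set_option linter.unusedVariables false
set_option maxHeartbeats 2000000

variable {T : Type} [PartialOrder T] [Fintype T] {L : Set T}

lemma case_ib (hch : ∀ e s t : T, s ≤ e → t ≤ e → s ≤ t ∨ t ≤ s)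
    {e r₂ e₂ : T} {v₂ : Set T} {P Q R : PreTree T}
    (hP : IsFace L P) (hQ : IsFace L Q) (hR : IsFace L R)
    (hef : ElemF (.inner e) Q P) (heg : ElemF (.bot v₂ r₂ e₂) R Q)
    (hSQ : ∀ Pg, ElemF (.bot v₂ r₂ e₂) Pg P → ElemF (.inner e) R Pg → False)
    (hSM : ∀ (hx h' : FLbl T) (X : PreTree T), ElemF h' X P → ElemF hx R X →
        Q.edges ∪ X.edges = P.edges → MixedPair (.inner e) h' P → False) : False := by
  classical
  have hef' := hef
  obtain ⟨⟨hev, oe, hoe, hin⟩, hE, hV⟩ := hef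
  obtain ⟨r, hr⟩ := hP.2.1
  have heP : e ∈ P.edges := face_vsub hP hev
  have hre : r < e := lt_of_le_of_lt (hr.2 oe (face_vsub hP hoe)) hin.2.1
  have hre' : r ≠ e := ne_of_lt hre
  have hrQ : RootOf Q r :=
    root_of_sub hr (by rw [hE]; exact ⟨hr.1, hre'⟩) (by rw [hE]; exact fun z hz => hz.1)
  obtain ⟨hr₂, hr₂v, hv₂, he₂v, hcond₂, hE₂, hV₂⟩ := heg
  have hr₂r : r₂ = r := root_unique hr₂ hrQ
  rw [hr₂r] at hr₂ hr₂v hv₂ hV₂ hSQ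
  have hrPv : r ∈ P.vert := (hV ▸ hr₂v : r ∈ P.vert \ {e}).1
  have hQsub : Q.edges ⊆ P.edges := by rw [hE]; exact fun z hz => hz.1
  by_cases hem : e ∈ Inps P r
  · -- the contracted edge is attached to the root vertex: use axiom (F4)
    have hemI : InputOf P e r := hem
    have hv₂m : v₂ = (Inps P r \ {e}) ∪ Inps P e := by
      rw [hv₂, inner_inps_merge hch hef' hP hem]
    have he₂m : e₂ ∈ (Inps P r \ {e}) ∪ Inps P e := hv₂m ▸ he₂v
    rcases he₂m with ⟨he₂l, he₂ne⟩ | he₂r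
    · -- Case B : e₂ is another input of the root vertex
      have he₂rin : InputOf P e₂ r := he₂l
      have hinplv : ∀ x, x ∈ Inps P e → x ∉ P.vert := by
        intro x hx
        have hxI : InputOf P x e := hx
        have hxne₂ : x ≠ e₂ := by
          intro hc; subst hc
          exact he₂rin.2.2 ⟨e, heP, hre, hxI.2.1⟩
        have hxv₂ : x ∈ v₂ := by rw [hv₂m]; exact Or.inr hx
        have hxe : x ≠ e := ne_of_gt hxI.2.1
        intro hc
        exact hcond₂ x hxv₂ hxne₂ (by rw [hV]; exact ⟨hc, hxe⟩)
      have h' : ElemF (.top (Inps P e) e) (⟨P.edges \ Inps P e, P.vert \ {e}⟩ : PreTree T) P :=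
        ⟨hev, rfl, fun x hx => hinplv x hx, rfl, rfl⟩
      have hrni : r ∉ Inps P e := fun hc =>
        absurd (lt_trans hre (hc : InputOf P r e).2.1) (lt_irrefl _)
      have hIYr : Inps (⟨P.edges \ Inps P e, P.vert \ {e}⟩ : PreTree T) r = Inps P r :=
        top_inps_eq hch h' hP hr.1 hre'
      have hne₂e : ¬ e₂ ≤ e := input_not_le_input he₂rin hemI (fun hc => he₂ne hc)
      have hnee₂ : ¬ e ≤ e₂ := input_not_le_input hemI he₂rin (fun hc => he₂ne hc.symm)
      have hxel : ElemF (.bot (Inps (⟨P.edges \ Inps P e, P.vert \ {e}⟩ : PreTree T) r) r e₂) R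
          (⟨P.edges \ Inps P e, P.vert \ {e}⟩ : PreTree T) := by
        refine ⟨root_of_sub hr ⟨hr.1, hrni⟩ (fun z hz => hz.1), ⟨hrPv, hre'⟩, rfl,
          by rw [hIYr]; exact he₂l, ?_, ?_, ?_⟩
        · intro x hx hxe₂
          rw [hIYr] at hx
          by_cases hxe : x = e
          · exact fun hc => hc.2 hxe
          · have hxv₂ : x ∈ v₂ := by rw [hv₂m]; exact Or.inl ⟨hx, hxe⟩
            intro hc
            exact hcond₂ x hxv₂ hxe₂ (by rw [hV]; exact ⟨hc.1, hxe⟩)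
        · rw [hE₂, hE]
          ext x
          simp only [Set.mem_setOf_eq, Set.mem_diff, Set.mem_singleton_iff]
          constructor
          · rintro ⟨⟨hxP, hxe⟩, hx2⟩
            refine ⟨⟨hxP, fun hc => ?_⟩, hx2⟩
            have hcI : InputOf P x e := hc
            rcases hch x e e₂ hcI.2.1.le hx2 with hc2 | hc2
            · exact hnee₂ hc2
            · exact hne₂e hc2
          · rintro ⟨⟨hxP, hxw⟩, hx2⟩
            refine ⟨⟨hxP, fun hc => hne₂e (hc ▸ hx2)⟩, hx2⟩
        · rw [hV₂, hV, Set.diff_diff_comm]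
      have hunion : Q.edges ∪ (⟨P.edges \ Inps P e, P.vert \ {e}⟩ : PreTree T).edges
          = P.edges := by
        rw [hE]
        ext x
        simp only [Set.mem_union, Set.mem_diff, Set.mem_singleton_iff]
        constructor
        · rintro (⟨hx, -⟩ | ⟨hx, -⟩) <;> exact hx
        · intro hx
          by_cases hxe : x = e
          · subst hxe
            exact Or.inr ⟨hx, fun hc => absurd (hc : InputOf P x x).2.1 (lt_irrefl _)⟩
          · exact Or.inl ⟨hx, hxe⟩
      have hmp : MixedPair (.inner e) (.top (Inps P e) e) P := by
        right
        refine ⟨e, e, rfl, ⟨hev, r, hrPv, hemI⟩, Or.inl rfl, Or.inl rfl, ?_⟩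
        rintro e' ⟨he'v, -⟩ (rfl | hatt)
        · rfl
        · exact absurd he'v (hinplv e' hatt)
      exact hSM _ _ _ h' hxel hunion hmp
    · -- Case A : e₂ is an input of the contracted edge
      have he₂in : InputOf P e₂ e := he₂r
      have hee₂ : e < e₂ := he₂in.2.1
      have hconX : ∀ x ∈ Inps P r, x ≠ e → x ∉ P.vert := by
        intro x hx hxe
        have hxne₂ : x ≠ e₂ := by
          intro hc; subst hc
          exact (hx : InputOf P x r).2.2 ⟨e, heP, hre, hee₂⟩
        have hxv₂ : x ∈ v₂ := by rw [hv₂m]; exact Or.inl ⟨hx, hxe⟩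
        intro hc
        exact hcond₂ x hxv₂ hxne₂ (by rw [hV]; exact ⟨hc, hxe⟩)
      have h' : ElemF (.bot (Inps P r) r e) (⟨{x ∈ P.edges | e ≤ x}, P.vert \ {r}⟩ : PreTree T) P :=
        ⟨hr, hrPv, rfl, hem, hconX, rfl, rfl⟩
      have hIXe : Inps (⟨{x ∈ P.edges | e ≤ x}, P.vert \ {r}⟩ : PreTree T) e = Inps P e :=
        bot_inps_eq h' le_rfl
      have hxel : ElemF (.bot (Inps (⟨{x ∈ P.edges | e ≤ x}, P.vert \ {r}⟩ : PreTree T) e) e e₂) R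
          (⟨{x ∈ P.edges | e ≤ x}, P.vert \ {r}⟩ : PreTree T) := by
        refine ⟨⟨⟨heP, le_rfl⟩, fun x hx => hx.2⟩, ⟨hev, fun hc => hre' (Set.mem_singleton_iff.mp hc).symm⟩, rfl,
          by rw [hIXe]; exact he₂r, ?_, ?_, ?_⟩
        · intro x hx hxe₂
          rw [hIXe] at hx
          have hxI : InputOf P x e := hx
          have hxe : x ≠ e := ne_of_gt hxI.2.1
          have hxr : x ≠ r := fun hc => absurd (hc ▸ lt_trans hre hxI.2.1) (lt_irrefl _)
          have hxv₂ : x ∈ v₂ := by rw [hv₂m]; exact Or.inr hx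
          intro hc
          exact hcond₂ x hxv₂ hxe₂ (by rw [hV]; exact ⟨hc.1, hxe⟩)
        · rw [hE₂, hE]
          ext x
          simp only [Set.mem_setOf_eq, Set.mem_diff, Set.mem_singleton_iff]
          constructor
          · rintro ⟨⟨hxP, hxe⟩, hx2⟩
            exact ⟨⟨hxP, le_trans hee₂.le hx2⟩, hx2⟩
          · rintro ⟨⟨hxP, -⟩, hx2⟩
            refine ⟨⟨hxP, fun hc => ?_⟩, hx2⟩
            subst hc
            exact absurd hx2 (not_le_of_gt hee₂)
        · rw [hV₂, hV, Set.diff_diff_comm]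
      have hunion : Q.edges ∪ (⟨{x ∈ P.edges | e ≤ x}, P.vert \ {r}⟩ : PreTree T).edges
          = P.edges := by
        rw [hE]
        ext x
        simp only [Set.mem_union, Set.mem_diff, Set.mem_singleton_iff, Set.mem_setOf_eq]
        constructor
        · rintro (⟨hx, -⟩ | ⟨hx, -⟩) <;> exact hx
        · intro hx
          by_cases hxe : x = e
          · exact Or.inr ⟨hx, hxe ▸ le_rfl⟩
          · exact Or.inl ⟨hx, hxe⟩
      have hmp : MixedPair (.inner e) (.bot (Inps P r) r e) P := by
        right
        refine ⟨e, r, rfl, ⟨hev, r, hrPv, hemI⟩, Or.inr ⟨e, rfl, hr⟩, Or.inr hemI, ?_⟩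
        rintro e' ⟨he'v, o', ho', hin'⟩ (rfl | hatt)
        · exact absurd (hr.2 o' (face_vsub hP ho')) (not_le_of_gt hin'.2.1)
        · by_contra he'e
          exact hconX e' hatt he'e he'v
      exact hSM _ _ _ h' hxel hunion hmp
  · -- the contracted edge is not attached to the root vertex: commuting square
    have hv₂P : v₂ = Inps P r := by rw [hv₂, inner_inps_eq hef' hP hr.1 hem]
    have he₂in : InputOf P e₂ r := by
      have : e₂ ∈ Inps P r := hv₂P ▸ he₂v
      exact this
    have he₂P : e₂ ∈ P.edges := he₂in.1
    have hre₂ : r < e₂ := he₂in.2.1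
    -- e₂ lies below e
    have hee₂ : e₂ < e := by
      obtain ⟨y, hy, hyle⟩ := input_below hP heP hr.1 hre
      have hyne : y ≠ e := fun hc => hem (hc ▸ hy)
      have hylt : y < e := lt_of_le_of_ne hyle hyne
      have hyv : y ∈ P.vert := face_full hP hy.1 heP hylt
      have hyv₂ : y ∈ v₂ := by rw [hv₂P]; exact hy
      have hye₂ : y = e₂ := by
        by_contra hc
        exact hcond₂ y hyv₂ hc (by rw [hV]; exact ⟨hyv, hyne⟩)
      exact hye₂ ▸ hylt
    have h1 : ElemF (.bot v₂ r e₂) (⟨{x ∈ P.edges | e₂ ≤ x}, P.vert \ {r}⟩ : PreTree T) P := by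
      refine ⟨hr, hrPv, hv₂P, he₂v, ?_, rfl, rfl⟩
      intro x hx hxe₂
      have hxe : x ≠ e := by
        intro hc; subst hc; exact hem (hv₂P ▸ hx)
      intro hc
      exact hcond₂ x hx hxe₂ (by rw [hV]; exact ⟨hc, hxe⟩)
    have h2 : ElemF (.inner e) R (⟨{x ∈ P.edges | e₂ ≤ x}, P.vert \ {r}⟩ : PreTree T) := by
      have he₂oe : e₂ ≤ oe := by
        rcases hch e oe e₂ hin.2.1.le hee₂.le with hc | hc
        · rcases lt_or_eq_of_le hc with hc' | hc'
          · exact absurd (hin.2.2 ⟨e₂, he₂P, hc', hee₂⟩) (fun hh => hh)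
          · exact hc'.ge
        · exact hc
      have hoePg : oe ∈ P.vert \ {r} :=
        ⟨hoe, fun hc => absurd ((Set.mem_singleton_iff.mp hc) ▸ lt_of_lt_of_le hre₂ he₂oe)
          (lt_irrefl _)⟩
      refine ⟨⟨⟨hev, fun hc => hre' (Set.mem_singleton_iff.mp hc).symm⟩, oe, hoePg,
        inputOf_mono (fun z hz => hz.1) hin ⟨heP, hee₂.le⟩⟩, ?_, ?_⟩
      · rw [hE₂, hE]
        exact sep_diff P.edges {e} (fun x => e₂ ≤ x)
      · rw [hV₂, hV, Set.diff_diff_comm]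
    exact hSQ _ h1 h2

end Stmt16Cases5
section Stmt16Cases6
set_option linter.unusedSectionVars false
set_option linter.unusedVariables false
set_option maxHeartbeats 2000000

variable {T : Type} [PartialOrder T] [Fintype T] {L : Set T}

lemma case_tb (hch : ∀ e s t : T, s ≤ e → t ≤ e → s ≤ t ∨ t ≤ s)
    {o r₂ e₂ : T} {w v₂ : Set T} {P Q R : PreTree T}
    (hP : IsFace L P) (hQ : IsFace L Q) (hR : IsFace L R)
    (hef : ElemF (.top w o) Q P) (heg : ElemF (.bot v₂ r₂ e₂) R Q)
    (hSQ : ∀ Pg, ElemF (.bot v₂ r₂ e₂) Pg P → ElemF (.top w o) R Pg → False)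
    (hSM : ∀ (hx h' : FLbl T) (X : PreTree T), ElemF h' X P → ElemF hx R X →
        Q.edges ∪ X.edges = P.edges → MixedPair (.top w o) h' P → False) : False := by
  classical
  have hef' := hef
  obtain ⟨hov, hw, hwnv, hE, hV⟩ := hef
  obtain ⟨r, hr⟩ := hP.2.1
  have hoPe : o ∈ P.edges := face_vsub hP hov
  have hwlt : ∀ x ∈ w, o < x := by
    intro x hx
    have hx' : x ∈ Inps P o := hw ▸ hx
    exact (hx' : InputOf P x o).2.1
  have hrw : r ∉ w := fun hc =>
    absurd (lt_of_lt_of_le (hwlt r hc) (hr.2 o hoPe)) (lt_irrefl _)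
  have how : o ∉ w := fun hc => absurd (hwlt o hc) (lt_irrefl _)
  have hrQ : RootOf Q r :=
    root_of_sub hr (by rw [hE]; exact ⟨hr.1, hrw⟩) (by rw [hE]; exact fun z hz => hz.1)
  obtain ⟨hr₂, hr₂v, hv₂, he₂v, hcond₂, hE₂, hV₂⟩ := heg
  have hr₂r : r₂ = r := root_unique hr₂ hrQ
  rw [hr₂r] at hr₂ hr₂v hv₂ hV₂ hSQ
  have hrPv : r ∈ P.vert := (hV ▸ hr₂v : r ∈ P.vert \ {o}).1
  have hro : r ≠ o := (hV ▸ hr₂v : r ∈ P.vert \ {o}).2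
  have hQsub : Q.edges ⊆ P.edges := by rw [hE]; exact fun z hz => hz.1
  have hv₂P : v₂ = Inps P r := by rw [hv₂, top_inps_eq hch hef' hP hr.1 hro]
  have he₂in : InputOf P e₂ r := by
    have : e₂ ∈ Inps P r := hv₂P ▸ he₂v
    exact this
  have hre₂ : r < e₂ := he₂in.2.1
  by_cases hom : o ∈ Inps P r
  · have homI : InputOf P o r := hom
    by_cases he₂o : e₂ = o
    · -- commuting square
      have h1 : ElemF (.bot v₂ r e₂) (⟨{x ∈ P.edges | e₂ ≤ x}, P.vert \ {r}⟩ : PreTree T) P := by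
        refine ⟨hr, hrPv, hv₂P, he₂v, ?_, rfl, rfl⟩
        intro x hx hxe₂
        have hxo : x ≠ o := fun hc => hxe₂ (hc.trans he₂o.symm)
        intro hc
        exact hcond₂ x hx hxe₂ (by rw [hV]; exact ⟨hc, hxo⟩)
      have h2 : ElemF (.top w o) R (⟨{x ∈ P.edges | e₂ ≤ x}, P.vert \ {r}⟩ : PreTree T) := by
        refine ⟨⟨hov, fun hc => hro (Set.mem_singleton_iff.mp hc).symm⟩,
          by rw [hw, bot_inps_eq h1 (le_of_eq he₂o)], ?_, ?_, ?_⟩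
        · intro x hx hc
          exact hwnv x hx hc.1
        · rw [hE₂, hE]
          exact sep_diff P.edges w (fun x => e₂ ≤ x)
        · rw [hV₂, hV, Set.diff_diff_comm]
      exact hSQ _ h1 h2
    · -- F4 route via the inner face of `o`
      have h' : ElemF (.inner o) (⟨P.edges \ {o}, P.vert \ {o}⟩ : PreTree T) P :=
        ⟨⟨hov, r, hrPv, homI⟩, rfl, rfl⟩
      have hIXr : Inps (⟨P.edges \ {o}, P.vert \ {o}⟩ : PreTree T) r
          = (Inps P r \ {o}) ∪ Inps P o := inner_inps_merge hch h' hP hom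
      have hne₂o : ¬ e₂ ≤ o := input_not_le_input he₂in homI he₂o
      have hnoe₂ : ¬ o ≤ e₂ := input_not_le_input homI he₂in (fun hc => he₂o hc.symm)
      have hxel : ElemF (.bot ((v₂ \ {o}) ∪ w) r e₂) R
          (⟨P.edges \ {o}, P.vert \ {o}⟩ : PreTree T) := by
        refine ⟨root_of_sub hr ⟨hr.1, fun hc => hro (Set.mem_singleton_iff.mp hc)⟩
            (fun z hz => hz.1), ⟨hrPv, fun hc => hro (Set.mem_singleton_iff.mp hc)⟩, ?_,
          Or.inl ⟨he₂v, he₂o⟩, ?_, ?_, ?_⟩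
        · rw [hIXr, hv₂P, hw]
        · rintro x (⟨hxv₂, hxo⟩ | hxw) hxe₂
          · intro hc
            exact hcond₂ x hxv₂ hxe₂ (by rw [hV]; exact ⟨hc.1, fun hh => hxo (hh ▸ rfl)⟩)
          · exact fun hc => hwnv x hxw hc.1
        · rw [hE₂, hE]
          ext x
          simp only [Set.mem_setOf_eq, Set.mem_diff, Set.mem_singleton_iff]
          constructor
          · rintro ⟨⟨hxP, hxw⟩, hx2⟩
            refine ⟨⟨hxP, fun hc => ?_⟩, hx2⟩
            subst hc
            exact hne₂o hx2
          · rintro ⟨⟨hxP, hxo⟩, hx2⟩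
            refine ⟨⟨hxP, fun hc => ?_⟩, hx2⟩
            rcases hch x o e₂ (hwlt x hc).le hx2 with hc2 | hc2
            · exact hnoe₂ hc2
            · exact hne₂o hc2
        · rw [hV₂, hV, Set.diff_diff_comm]
      have hunion : Q.edges ∪ (⟨P.edges \ {o}, P.vert \ {o}⟩ : PreTree T).edges
          = P.edges := by
        rw [hE]
        ext x
        simp only [Set.mem_union, Set.mem_diff, Set.mem_singleton_iff]
        constructor
        · rintro (⟨hx, -⟩ | ⟨hx, -⟩) <;> exact hx
        · intro hx
          by_cases hxo : x = o
          · exact Or.inl ⟨hx, fun hc => how (hxo ▸ hc)⟩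
          · exact Or.inr ⟨hx, hxo⟩
      have hmp : MixedPair (.top w o) (.inner o) P := by
        left
        refine ⟨o, o, rfl, ⟨hov, r, hrPv, homI⟩, Or.inl (by rw [hw]), Or.inl rfl, ?_⟩
        rintro e' ⟨he'v, -⟩ (rfl | hatt)
        · rfl
        · have : e' ∈ w := by rw [hw]; exact hatt
          exact absurd he'v (hwnv e' this)
      exact hSM _ _ _ h' hxel hunion hmp
  · -- o is not attached to the root vertex: commuting square
    have hoe₂ : e₂ < o := by
      have hro' : r < o := lt_of_le_of_ne (hr.2 o hoPe) hro
      obtain ⟨y, hy, hyle⟩ := input_below hP hoPe hr.1 hro'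
      have hyne : y ≠ o := fun hc => hom (hc ▸ hy)
      have hylt : y < o := lt_of_le_of_ne hyle hyne
      have hyv : y ∈ P.vert := face_full hP hy.1 hoPe hylt
      have hyv₂ : y ∈ v₂ := by rw [hv₂P]; exact hy
      have hye₂ : y = e₂ := by
        by_contra hc
        exact hcond₂ y hyv₂ hc (by rw [hV]; exact ⟨hyv, hyne⟩)
      exact hye₂ ▸ hylt
    have h1 : ElemF (.bot v₂ r e₂) (⟨{x ∈ P.edges | e₂ ≤ x}, P.vert \ {r}⟩ : PreTree T) P := by
      refine ⟨hr, hrPv, hv₂P, he₂v, ?_, rfl, rfl⟩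
      intro x hx hxe₂
      have hxo : x ≠ o := fun hc => hom (hc ▸ (hv₂P ▸ hx))
      intro hc
      exact hcond₂ x hx hxe₂ (by rw [hV]; exact ⟨hc, hxo⟩)
    have h2 : ElemF (.top w o) R (⟨{x ∈ P.edges | e₂ ≤ x}, P.vert \ {r}⟩ : PreTree T) := by
      refine ⟨⟨hov, fun hc => hro (Set.mem_singleton_iff.mp hc).symm⟩,
        by rw [hw, bot_inps_eq h1 hoe₂.le], ?_, ?_, ?_⟩
      · intro x hx hc
        exact hwnv x hx hc.1
      · rw [hE₂, hE]
        exact sep_diff P.edges w (fun x => e₂ ≤ x)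
      · rw [hV₂, hV, Set.diff_diff_comm]
    exact hSQ _ h1 h2

end Stmt16Cases6
set_option linter.unusedVariables false
set_option maxHeartbeats 2000000
/-- Canonical extensions are disjoint: (1) for canonical extensions
`(Q₁, P₁)`, `(Q₂, P₂)` we have `P₁ = P₂` iff `Q₁ = Q₂`; (2) two composable pairs
`(∂_g ∂_f P, ∂_f P)` and `(∂_f P, P)` cannot both be canonical extensions. -/
theorem stmt16 {T : Type} [Fintype T] [PartialOrder T]
    (rT : T) (hroot : ∀ t, rT ≤ t)
    (hchain : ∀ e s t : T, s ≤ e → t ≤ e → s ≤ t ∨ t ≤ s)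
    (L : Set T) (hL : ∀ l ∈ L, IsMax l)
    (Missing : Set (PreTree T))
    -- `Missing` is the set of missing faces of a dendroidal subset `A ⊆ Ω[T]`
    (hA : ∀ P Q : PreTree T, IsFace L P → IsFace L Q → SubtreeRel P Q →
      P ∈ Missing → Q ∈ Missing)
    -- the compatible total order on labels induced by a planar structure
    (pord : FLbl T → FLbl T → Prop)
    (pord_refl : ∀ f, pord f f)
    (pord_trans : ∀ f g h, pord f g → pord g h → pord f h)
    (pord_antisymm : ∀ f g, pord f g → pord g f → f = g)
    (pord_total : ∀ f g, pord f g ∨ pord g f)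
    (F : Set (FLbl T × PreTree T × PreTree T))
    (hF : ExtSet L Missing F) :
    (∀ Q₁ P₁ Q₂ P₂ : PreTree T, Canon F pord Q₁ P₁ → Canon F pord Q₂ P₂ →
      (P₁ = P₂ ↔ Q₁ = Q₂)) ∧
    (∀ P Q R : PreTree T, Canon F pord Q P → ¬ Canon F pord R Q) := by
  classical
  obtain ⟨hmem, hMixed, hBad, hAdj, hF2, hF3, hF4, hF5⟩ := hF
  constructor
  · rintro Q₁ P₁ Q₂ P₂ ⟨f₁, h₁, hmin₁, hext₁⟩ ⟨f₂, h₂, hmin₂, hext₂⟩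
    constructor
    · intro hP
      subst hP
      have hf : f₁ = f₂ := pord_antisymm _ _ (hmin₁ f₂ Q₂ h₂) (hmin₂ f₁ Q₁ h₁)
      subst hf
      exact elemF_left_unique (hmem _ h₁).1 (hmem _ h₂).1
    · intro hQ
      subst hQ
      have hf : f₁ = f₂ := pord_antisymm _ _ (hext₁ f₂ P₂ h₂) (hext₂ f₁ P₁ h₁)
      subst hf
      exact elemF_right_unique (hmem _ h₁).1 (hmem _ h₂).1
        (hmem _ h₁).2.2.1 (hmem _ h₂).2.2.1
  · rintro P Q R ⟨f, hfF, hfmin, hfext⟩ ⟨g, hgF, hgmin, hgext⟩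
    have hef : ElemF f Q P := (hmem _ hfF).1
    have hQ : IsFace L Q := (hmem _ hfF).2.1
    have hP : IsFace L P := (hmem _ hfF).2.2.1
    have heg : ElemF g R Q := (hmem _ hgF).1
    have hR : IsFace L R := (hmem _ hgF).2.1
    have hSQ : ∀ Pg : PreTree T, ElemF g Pg P → ElemF f R Pg → False := by
      intro Pg h1 h2
      have hPg : IsFace L Pg := isFace_step hchain h1 hP
      obtain ⟨hfRPg, -, -, hgPgP⟩ :=
        hF3 f g P Q Pg R hef h1 heg h2 hP hQ hPg hR (Or.inr hfF) (Or.inl hgF)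
      have hfg : f = g := pord_antisymm _ _ (hfmin g Pg hgPgP) (hgext f Pg hfRPg)
      subst hfg
      exact elem_no_repeat hef heg hQ
    have hADJ : AdjacentComp g f Q P → False := fun h => hAdj ⟨f, g, R, Q, P, hgF, hfF, h⟩
    have hstep : ∀ (hx h' : FLbl T) (X : PreTree T), ElemF h' X P → ElemF hx R X →
        Q.edges ∪ X.edges = P.edges → (h', X, P) ∈ F := by
      intro hx h' X hXP hRX hU
      have hXf : IsFace L X := isFace_step hchain hXP hP
      have hseqQ : IsSeq L Q [(f, Q, P)] P := ⟨rfl, hef, hQ, hP, rfl⟩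
      have hseqX : IsSeq L X [(h', X, P)] P := ⟨rfl, hXP, hXf, hP, rfl⟩
      exact hF4 g R Q hgF hx X hRX hXf P
        ⟨hP, [(f, Q, P)], [(h', X, P)], hseqQ, hseqX, rfl, le_refl 1⟩
        (min_ext hP (elemF_nv hef) hU) [(h', X, P)] hseqX (h', X, P) (by simp)
    have hSM : ∀ (hx h' : FLbl T) (X : PreTree T), ElemF h' X P → ElemF hx R X →
        Q.edges ∪ X.edges = P.edges → MixedPair f h' P → False :=
      fun hx h' X a b c hmp => hMixed ⟨f, h', Q, X, P, hfF, hstep hx h' X a b c, hmp⟩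
    clear hfF hgF hfmin hfext hgmin hgext hmem hMixed hBad hAdj hF2 hF3 hF4 hF5 hstep
    rcases f with e | ⟨w, o⟩ | ⟨v, r, e⟩ <;> rcases g with e₂ | ⟨w₂, o₂⟩ | ⟨v₂, r₂, e₂⟩
    · exact case_ii hchain hP hQ hR hef heg hSQ
    · exact case_it hchain hP hQ hR hef heg hSQ hADJ
    · exact case_ib hchain hP hQ hR hef heg hSQ hSM
    · exact case_ti hchain hP hQ hR hef heg hSQ
    · exact case_tt hchain hP hQ hR hef heg hSQ hADJ
    · exact case_tb hchain hP hQ hR hef heg hSQ hSM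
    · exact case_bi hchain hP hQ hR hef heg hSQ
    · exact case_bt hchain hP hQ hR hef heg hSQ
    · exact case_bb hchain hP hQ hR hef heg hSQ hADJ hSM
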